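/- arXiv:1705.02957 — 6 statements merged into one kernel-verified Lean document; each statement's English description precedes it below -/
import Mathlib

section
/- Fix N users and K = N REs with channel gains satisfying |h_{m,n,k}| > 0 for all m, n, k, powers P_n > 0 and noise N0 > 0, and suppose the strong interference condition holds. Then a strategy profile a ∈ {1,…,K}^N is a pure Nash equilibrium of the Naive-FSIG if and only if a is a bijection from users to REs (a perfect matching of users to REs); in particular the set of pure Nash equilibria of the Naive-FSIG has cardinality exactly N!. -/
open MeasureTheory ProbabilityTheory Filter

/-- The cumulative distribution function of a real random variable `X` under `μ`. -/
noncomputable def cdfOf {Ω : Type*} [MeasurableSpace Ω] (μ : Measure Ω) (X : Ω → ℝ) : ℝ → ℝ :=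
  fun x => (μ {ω | X ω ≤ x}).toReal

/-- `orderStat v j` is the `j`-th smallest value (1-indexed) among `v 0, …, v (K-1)`. -/
noncomputable def orderStat {K : ℕ} (v : Fin K → ℝ) (j : ℕ) : ℝ :=
  ((Finset.univ.val.map v).sort (· ≤ ·)).getD (j - 1) 0

/-- A finite family of random variables is `m`-dependent: every subfamily whose indices are
pairwise more than `m` apart is jointly independent. -/
def MDepFam {Ω β : Type*} [MeasurableSpace Ω] [MeasurableSpace β] (μ : Measure Ω) (m : ℕ)
    {K : ℕ} (X : Fin K → Ω → β) : Prop :=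
  ∀ S : Finset (Fin K),
    (∀ i ∈ S, ∀ j ∈ S, i ≠ j → (m : ℤ) < |(i : ℤ) - (j : ℤ)|) →
    iIndepFun (fun i : S => X i.1) μ

/-- `F` has an exponentially-dominated tail with parameters `(α, β, lam, γ)`:
`(1 - F x)/(α x^β e^{-lam x^γ}) → 1` as `x → ∞`. -/
def ExpDomTail (F : ℝ → ℝ) (α β lam γ : ℝ) : Prop :=
  Tendsto (fun x : ℝ => (1 - F x) / (α * x ^ β * Real.exp (-lam * x ^ γ))) atTop (nhds 1)

/-- Interference experienced by user `n` on RE `k` under the profile `a`. -/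
noncomputable def interf {N : ℕ} (h : Fin N → Fin N → Fin N → ℂ) (P : Fin N → ℝ)
    (a : Fin N → Fin N) (n k : Fin N) : ℝ :=
  ∑ m ∈ Finset.univ.filter (fun m => m ≠ n ∧ a m = k), ‖h m n k‖ ^ 2 * P m

/-- Achievable rate of user `n` under the profile `a`, treating interference as noise. -/
noncomputable def rate {N : ℕ} (h : Fin N → Fin N → Fin N → ℂ) (P : Fin N → ℝ) (N0 : ℝ)
    (a : Fin N → Fin N) (n : Fin N) : ℝ :=
  Real.logb 2 (1 + P n * ‖h n n (a n)‖ ^ 2 / (N0 + interf h P a n (a n)))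

/-- Pure Nash equilibrium of the game with utilities `u` (utility of user `n` at profile `a`
is `u a n`). -/
def IsPNE {N : ℕ} (u : (Fin N → Fin N) → Fin N → ℝ) (a : Fin N → Fin N) : Prop :=
  ∀ n k, u (Function.update a n k) n ≤ u a n

/-- The M-FSIG utility of user `n` at profile `a`. -/
noncomputable def mfsigUtil {N : ℕ} (h : Fin N → Fin N → Fin N → ℂ) (P : Fin N → ℝ)
    (N0 : ℝ) (M : ℕ) (a : Fin N → Fin N) (n : Fin N) : ℝ :=
  if orderStat (fun k => ‖h n n k‖) (N - M + 1) ≤ ‖h n n (a n)‖ then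
    Real.logb 2 (1 + P n * orderStat (fun k => ‖h n n k‖) (N - M + 1) ^ 2 /
      (N0 + interf h P a n (a n)))
  else 0

/-- Weighted sum-rate `W(a) = ∑ n, w n * R n (a)`. -/
noncomputable def wsum {N : ℕ} (h : Fin N → Fin N → Fin N → ℂ) (P : Fin N → ℝ) (N0 : ℝ)
    (w : Fin N → ℝ) (a : Fin N → Fin N) : ℝ :=
  ∑ n, w n * rate h P N0 a n

/-- Number of sharing users of a profile `a`. -/
noncomputable def numSharing {N : ℕ} (a : Fin N → Fin N) : ℕ :=
  (Finset.univ.filter fun n => ∃ m, m ≠ n ∧ a m = a n).card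

lemma interf_nonneg {N : ℕ} (h : Fin N → Fin N → Fin N → ℂ) (P : Fin N → ℝ)
    (hP : ∀ n, 0 < P n) (a : Fin N → Fin N) (n k : Fin N) : 0 ≤ interf h P a n k := by
  apply Finset.sum_nonneg
  intro m _
  exact mul_nonneg (by positivity) (hP m).le

/-- Key algebraic inequality from the strong interference condition. -/
lemma key_div {A B c Pm N0 I : ℝ} (hA : 0 < A) (hB : 0 < B) (hc : 0 < c) (hN0 : 0 < N0)
    (hI : 0 ≤ I) (hIc : Pm * c ≤ I) (hyp : (1 / c) * (A / B - 1) < Pm / N0) :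
    A / (N0 + I) < B / N0 := by
  have h1 : (A / B - 1) / c < Pm / N0 := by rwa [one_div_mul_eq_div] at hyp
  have h2 : (A / B - 1) * N0 < Pm * c := (div_lt_div_iff₀ hc hN0).mp h1
  have h3 : (A / B) * N0 < N0 + I := by nlinarith
  have h3' : A * N0 / B < N0 + I := by rw [← div_mul_eq_mul_div]; exact h3
  have h4 : A * N0 < (N0 + I) * B := (div_lt_iff₀ hB).mp h3'
  rw [div_lt_div_iff₀ (by linarith) hN0]
  nlinarith

lemma rate_lt {N : ℕ} (h : Fin N → Fin N → Fin N → ℂ) (P : Fin N → ℝ) {N0 : ℝ}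
    (hP : ∀ n, 0 < P n) (hN0 : 0 < N0) {n : Fin N} {A B I I' : ℝ}
    (hA : 0 < A) (hB : 0 < B) (hI : 0 ≤ I) (hI' : 0 ≤ I')
    (hlt : A / (N0 + I) < B / (N0 + I')) :
    Real.logb 2 (1 + P n * A / (N0 + I)) < Real.logb 2 (1 + P n * B / (N0 + I')) := by
  have hPn := hP n
  apply Real.logb_lt_logb (by norm_num)
  · have : 0 ≤ P n * A / (N0 + I) := by positivity
    linarith
  · have h1 : P n * A / (N0 + I) < P n * B / (N0 + I') := by
      rw [mul_div_assoc, mul_div_assoc]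
      exact (mul_lt_mul_iff_right₀ hPn).mpr hlt
    linarith

/-- Under the strong interference condition, the pure Nash equilibria of the
Naive-FSIG are exactly the bijections from users to REs, and there are exactly `N !` of them. -/
theorem stmt_2 {N : ℕ} (h : Fin N → Fin N → Fin N → ℂ) (P : Fin N → ℝ) (N0 : ℝ)
    (hh : ∀ m n k, 0 < ‖h m n k‖) (hP : ∀ n, 0 < P n) (hN0 : 0 < N0)
    (hstrong : ∀ m l n k, (1 / ‖h m n l‖ ^ 2) *
        (‖h n n l‖ ^ 2 / ‖h n n k‖ ^ 2 - 1) < P m / N0) :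
    (∀ a : Fin N → Fin N, IsPNE (fun b n => rate h P N0 b n) a ↔ Function.Bijective a) ∧
    Nat.card {a : Fin N → Fin N // IsPNE (fun b n => rate h P N0 b n) a} = Nat.factorial N := by
  have hint := interf_nonneg h P hP
  have main : ∀ a : Fin N → Fin N, IsPNE (fun b n => rate h P N0 b n) a ↔ Function.Bijective a := by
    intro a
    constructor
    · -- PNE → bijective
      intro hpne
      rw [Fintype.bijective_iff_injective_and_card]
      refine ⟨?_, rfl⟩
      by_contra hinj
      -- there is a collision
      obtain ⟨m, n, hamn, hmn⟩ : ∃ m n, a m = a n ∧ m ≠ n := by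
        simpa [Function.Injective, not_forall] using hinj
      -- and an empty RE
      have hsurj : ¬ Function.Surjective a := by
        intro hs
        exact hinj (Finite.injective_iff_surjective.mpr hs)
      obtain ⟨k, hk⟩ : ∃ k, ∀ m, a m ≠ k := by
        simpa [Function.Surjective, not_forall, eq_comm] using hsurj
      -- deviation of n to k strictly improves
      have hIk : interf h P (Function.update a n k) n k = 0 := by
        apply Finset.sum_eq_zero
        intro x hx
        simp only [Finset.mem_filter, Finset.mem_univ, true_and] at hx
        rw [Function.update_of_ne hx.1] at hx
        exact absurd hx.2 (hk x)
      have hIlow : ‖h m n (a n)‖ ^ 2 * P m ≤ interf h P a n (a n) := by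
        apply Finset.single_le_sum (f := fun x => ‖h x n (a n)‖ ^ 2 * P x)
        · intro x _; exact mul_nonneg (by positivity) (hP x).le
        · simp [hmn, hamn]
      have hlt : rate h P N0 a n < rate h P N0 (Function.update a n k) n := by
        unfold rate
        rw [Function.update_self, hIk]
        apply rate_lt h P hP hN0 (pow_pos (hh n n (a n)) 2) (pow_pos (hh n n k) 2)
          (hint a n (a n)) le_rfl
        rw [add_zero]
        apply key_div (pow_pos (hh n n (a n)) 2) (pow_pos (hh n n k) 2)
          (pow_pos (hh m n (a n)) 2) hN0
          (hint a n (a n)) (by rw [mul_comm]; exact hIlow)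
        exact hstrong m (a n) n k
      exact absurd (hpne n k) (not_le.mpr hlt)
    · -- bijective → PNE
      intro hbij n k
      by_cases hk : k = a n
      · simp [hk, Function.update_eq_self]
      -- some other user m occupies k
      obtain ⟨m, hm⟩ := hbij.2 k
      have hmn : m ≠ n := by rintro rfl; exact hk hm.symm
      have hIold : interf h P a n (a n) = 0 := by
        apply Finset.sum_eq_zero
        intro x hx
        simp only [Finset.mem_filter, Finset.mem_univ, true_and] at hx
        exact absurd (hbij.1 hx.2) hx.1
      have hIlow : ‖h m n k‖ ^ 2 * P m ≤ interf h P (Function.update a n k) n k := by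
        apply Finset.single_le_sum (f := fun x => ‖h x n k‖ ^ 2 * P x)
        · intro x _; exact mul_nonneg (by positivity) (hP x).le
        · simp [hmn, Function.update_of_ne hmn, hm]
      have hlt : rate h P N0 (Function.update a n k) n < rate h P N0 a n := by
        unfold rate
        rw [Function.update_self, hIold]
        apply rate_lt h P hP hN0 (pow_pos (hh n n k) 2) (pow_pos (hh n n (a n)) 2)
          (hint (Function.update a n k) n k) le_rfl
        rw [add_zero]
        apply key_div (pow_pos (hh n n k) 2) (pow_pos (hh n n (a n)) 2)
          (pow_pos (hh m n k) 2) hN0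
          (hint (Function.update a n k) n k) (by rw [mul_comm]; exact hIlow)
        exact hstrong m k n (a n)
      exact hlt.le
  refine ⟨main, ?_⟩
  have e1 : {a : Fin N → Fin N // IsPNE (fun b n => rate h P N0 b n) a} ≃
      {a : Fin N → Fin N // Function.Bijective a} := Equiv.subtypeEquivRight main
  have e2 : {a : Fin N → Fin N // Function.Bijective a} ≃ Equiv.Perm (Fin N) :=
    { toFun := fun f => Equiv.ofBijective f.1 f.2
      invFun := fun e => ⟨e, e.bijective⟩
      left_inv := fun f => Subtype.ext rfl
      right_inv := fun e => Equiv.ext fun x => rfl }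
  rw [Nat.card_congr (e1.trans e2), Nat.card_eq_fintype_card, Fintype.card_perm,
    Fintype.card_fin]
end

section
/- For each N, let X_{n,k} (1 ≤ n, k ≤ N) be positive random variables such that, for each n, the row X_{n,1},…,X_{n,N} is i.i.d. with a continuous CDF F_n satisfying F_n(x) > 0 for all x > 0, and suppose additionally that inf_n F_n(ε) > 0 for every ε > 0. Let M_N be a sequence of positive integers with M_N/N → 0. Then for every sequence m_N of integers with 1 ≤ m_N ≤ M_N, the random variable max_{1≤n≤N} X_{n,(m_N)} converges to 0 in probability as N → ∞. -/
open MeasureTheory ProbabilityTheory Filter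

lemma orderStat_count_lt {K m : ℕ} (v : Fin K → ℝ) (ε : ℝ) (hε : 0 ≤ ε) (hm : 1 ≤ m)
    (h : ε < orderStat v m) :
    (Finset.univ.filter (fun k => v k ≤ ε)).card < m := by
  classical
  set L := ((Finset.univ.val.map v).sort (· ≤ ·)) with hL
  have hLs : L.Pairwise (· ≤ ·) := Multiset.pairwise_sort _ _
  have hcount : (Finset.univ.filter (fun k => v k ≤ ε)).card
      = L.countP (fun x => decide (x ≤ ε)) := by
    have hcoe : (L : Multiset ℝ) = Finset.univ.val.map v := Multiset.sort_eq _ _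
    have := Multiset.countP_map v (Finset.univ.val) (fun x => x ≤ ε)
    rw [← hcoe] at this
    rw [Finset.card_filter, ← Multiset.coe_countP, this]
    simp [Finset.card_filter, Multiset.countP_eq_card_filter, Finset.filter]
  by_cases hlen : m - 1 < L.length
  · have hval : orderStat v m = L.get ⟨m-1, hlen⟩ := by
      rw [show orderStat v m = L.getD (m-1) 0 from rfl, List.getD_eq_getElem L 0 hlen]
      simp [List.get_eq_getElem]
    rw [hval] at h
    have hdrop : (L.drop (m-1)).countP (fun x => decide (x ≤ ε)) = 0 := by
      rw [List.countP_eq_zero]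
      intro a ha
      obtain ⟨j, hj, rfl⟩ := List.mem_iff_getElem.mp ha
      have hj' : m - 1 + j < L.length := by
        rw [List.length_drop] at hj; omega
      have hh : (L.drop (m-1))[j] = L.get ⟨m-1+j, hj'⟩ := by
        simp [List.getElem_drop]
      rw [hh]
      have h2 : L.get ⟨m-1, hlen⟩ ≤ L.get ⟨m-1+j, hj'⟩ :=
        hLs.rel_get_of_le (by simp [Fin.le_def])
      simp only [decide_eq_true_eq]
      push_neg
      exact lt_of_lt_of_le h h2
    have : L.countP (fun x => decide (x ≤ ε)) ≤ m - 1 := by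
      conv_lhs => rw [← List.take_append_drop (m-1) L]
      rw [List.countP_append, hdrop, Nat.add_zero]
      exact (List.countP_le_length).trans (by simp)
    omega
  · have : orderStat v m = 0 := List.getD_eq_default L 0 (by omega)
    rw [this] at h; linarith


lemma row_bound {Ω : Type} [MeasurableSpace Ω] (μ : Measure Ω) [IsProbabilityMeasure μ]
    {K : ℕ} (Y : Fin K → Ω → ℝ) (hYm : ∀ k, Measurable (Y k))
    (hindep : iIndepFun Y μ)
    (ε c : ℝ) (hc : ∀ k, c ≤ (μ {ω | Y k ω ≤ ε}).toReal) (m : ℕ) :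
    (μ {ω | ((Finset.univ.filter (fun k => Y k ω ≤ ε)).card : ℝ) ≤ m}).toReal
      ≤ Real.exp m * Real.exp (-(c * (1 - Real.exp (-1))) * K) := by
  classical
  set φ : ℝ → ℝ := fun x => if x ≤ ε then 1 else 0 with hφdef
  have hφ : Measurable φ :=
    Measurable.ite (measurableSet_le measurable_id measurable_const)
      measurable_const measurable_const
  set B : Fin K → Ω → ℝ := fun k => φ ∘ Y k with hBdef
  have hBm : ∀ k, Measurable (B k) := fun k => hφ.comp (hYm k)
  have hBindep : iIndepFun B μ :=
    hindep.comp (fun _ => φ) (fun _ => hφ)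
  have hSeq : (∑ k : Fin K, B k) = fun a => ∑ k : Fin K, B k a := by
    funext a; simp [Finset.sum_apply]
  have hSm : Measurable (∑ k, B k) := by
    rw [hSeq]; exact Finset.measurable_sum Finset.univ (fun k _ => hBm k)
  have hSnn : ∀ ω, 0 ≤ (∑ k, B k) ω := by
    intro ω
    rw [Finset.sum_apply]
    exact Finset.sum_nonneg fun k _ => by by_cases h : Y k ω ≤ ε <;> simp [B, φ, h]
  have hint : Integrable (fun ω => Real.exp ((-1) * (∑ k, B k) ω)) μ := by
    refine Integrable.mono' (integrable_const 1)
      ((hSm.const_mul (-1)).exp.aestronglyMeasurable) ?_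
    filter_upwards with ω
    rw [Real.norm_eq_abs, abs_of_pos (Real.exp_pos _)]
    rw [Real.exp_le_one_iff]
    nlinarith [hSnn ω]
  have hset : {ω | ((Finset.univ.filter (fun k => Y k ω ≤ ε)).card : ℝ) ≤ m}
      = {ω | (∑ k, B k) ω ≤ (m : ℝ)} := by
    ext ω
    simp only [Set.mem_setOf_eq, Finset.sum_apply]
    rw [show ∑ k, B k ω = ((Finset.univ.filter (fun k => Y k ω ≤ ε)).card : ℝ) by
      rw [← Finset.sum_boole]; rfl]
  have hchern := measure_le_le_exp_mul_mgf (μ := μ) (X := ∑ k, B k) (m : ℝ)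
    (by norm_num : (-1 : ℝ) ≤ 0) hint
  rw [hset]
  refine hchern.trans ?_
  have hmgf : mgf (∑ k, B k) μ (-1) = ∏ k, mgf (B k) μ (-1) :=
    hBindep.mgf_sum hBm Finset.univ
  have hmgfk : ∀ k, mgf (B k) μ (-1) = 1 + (Real.exp (-1) - 1) * (μ {ω | Y k ω ≤ ε}).toReal := by
    intro k
    have hA : MeasurableSet {ω | Y k ω ≤ ε} := measurableSet_le (hYm k) measurable_const
    have hfun : (fun ω => Real.exp ((-1) * B k ω))
        = fun ω => Set.indicator {ω | Y k ω ≤ ε} (fun _ => Real.exp (-1) - 1) ω + 1 := by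
      funext ω
      by_cases h : Y k ω ≤ ε <;> simp [B, φ, h, Set.indicator]
    rw [mgf]
    rw [hfun]
    rw [integral_add ((integrable_const _).indicator hA) (integrable_const 1)]
    rw [integral_indicator_const _ hA, integral_const]
    simp [smul_eq_mul]
    rw [measureReal_def]
    ring
  have hnn : ∀ k, 0 ≤ mgf (B k) μ (-1) := fun k => mgf_nonneg
  have hbound : ∀ k, mgf (B k) μ (-1) ≤ Real.exp (-(c * (1 - Real.exp (-1)))) := by
    intro k
    rw [hmgfk k]
    have h1 : (μ {ω | Y k ω ≤ ε}).toReal ≤ 1 := by simpa using ENNReal.toReal_mono ENNReal.one_ne_top prob_le_one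
    have h2 := hc k
    have h3 : Real.exp (-1) < 1 := Real.exp_lt_one_iff.mpr (by norm_num)
    have h4 : 1 + (Real.exp (-1) - 1) * (μ {ω | Y k ω ≤ ε}).toReal
        ≤ 1 + (-(c * (1 - Real.exp (-1)))) := by nlinarith
    refine h4.trans ?_
    linarith [Real.add_one_le_exp (-(c * (1 - Real.exp (-1))))]
  rw [hmgf]
  have hprod : ∏ k, mgf (B k) μ (-1) ≤ Real.exp (-(c * (1 - Real.exp (-1))) * K) := by
    calc ∏ k, mgf (B k) μ (-1) ≤ ∏ _k : Fin K, Real.exp (-(c * (1 - Real.exp (-1)))) :=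
          Finset.prod_le_prod (fun k _ => hnn k) (fun k _ => hbound k)
      _ = Real.exp (-(c * (1 - Real.exp (-1))) * K) := by
          rw [Finset.prod_const, ← Real.exp_nat_mul, Finset.card_univ, Fintype.card_fin]
          ring_nf
  calc Real.exp (- -1 * (m:ℝ)) * ∏ k, mgf (B k) μ (-1)
      = Real.exp (m:ℝ) * ∏ k, mgf (B k) μ (-1) := by norm_num
    _ ≤ Real.exp (m:ℝ) * Real.exp (-(c * (1 - Real.exp (-1))) * K) :=
        mul_le_mul_of_nonneg_left hprod (Real.exp_nonneg _)

/-- if each row `X N n ·` is i.i.d. with continuous CDF `F N n`, positive on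
`(0,∞)` and uniformly bounded below at every `ε > 0`, and `M N / N → 0`, then for every
sequence `1 ≤ m_N ≤ M_N`, the maximum over `n` of the `m_N`-th smallest row entry tends
to `0` in probability. -/
theorem stmt_3
    (Ω : ℕ → Type) (inst : ∀ N, MeasurableSpace (Ω N))
    (μ : ∀ N, Measure (Ω N)) (hprob : ∀ N, IsProbabilityMeasure (μ N))
    (X : ∀ N, Fin N → Fin N → Ω N → ℝ)
    (hmeas : ∀ N n k, Measurable (X N n k))
    (hpos : ∀ N n k ω, 0 < X N n k ω)
    (hrowindep : ∀ N (n : Fin N),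
      iIndepFun (fun k => X N n k) (μ N))
    (F : ∀ N, Fin N → ℝ → ℝ)
    (hcdf : ∀ N (n k : Fin N), cdfOf (μ N) (X N n k) = F N n)
    (hcont : ∀ N (n : Fin N), Continuous (F N n))
    (hFpos : ∀ N (n : Fin N), ∀ x : ℝ, 0 < x → 0 < F N n x)
    (hinf : ∀ e : ℝ, 0 < e → ∃ c : ℝ, 0 < c ∧ ∀ N (n : Fin N), c ≤ F N n e)
    (M : ℕ → ℕ) (hM : Tendsto (fun N => (M N : ℝ) / N) atTop (nhds 0))
    (mseq : ℕ → ℕ) (hm : ∀ N, 1 ≤ mseq N ∧ mseq N ≤ M N)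
    (ε : ℝ) (hε : 0 < ε) :
    Tendsto (fun N => μ N {ω | ∃ n : Fin N, ε < orderStat (fun k => X N n k ω) (mseq N)})
      atTop (nhds 0) := by
  classical
  obtain ⟨c, hc0, hcF⟩ := hinf ε hε
  set δ : ℝ := c * (1 - Real.exp (-1)) with hδdef
  have hexp1 : Real.exp (-1) < 1 := Real.exp_lt_one_iff.mpr (by norm_num)
  have hδ : 0 < δ := mul_pos hc0 (by linarith)
  set r : ℕ → ℝ := fun N => (N : ℝ) * (Real.exp (mseq N) * Real.exp (-δ * N)) with hrdef
  -- Step 1: the measure is bounded by ENNReal.ofReal (r N)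
  have hstep1 : ∀ N, μ N {ω | ∃ n : Fin N, ε < orderStat (fun k => X N n k ω) (mseq N)}
      ≤ ENNReal.ofReal (r N) := by
    intro N
    haveI := hprob N
    have hrow : ∀ n : Fin N,
        μ N {ω | ε < orderStat (fun k => X N n k ω) (mseq N)}
          ≤ ENNReal.ofReal (Real.exp (mseq N) * Real.exp (-δ * N)) := by
      intro n
      have hsub : {ω | ε < orderStat (fun k => X N n k ω) (mseq N)}
          ⊆ {ω | ((Finset.univ.filter (fun k => X N n k ω ≤ ε)).card : ℝ) ≤ (mseq N : ℝ)} := by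
        intro ω hω
        have := orderStat_count_lt (fun k => X N n k ω) ε hε.le (hm N).1 hω
        exact_mod_cast this.le
      have hc' : ∀ k : Fin N, c ≤ (μ N {ω | X N n k ω ≤ ε}).toReal := by
        intro k
        have h1 : cdfOf (μ N) (X N n k) ε = F N n ε := congrFun (hcdf N n k) ε
        have h2 : (μ N {ω | X N n k ω ≤ ε}).toReal = F N n ε := h1
        rw [h2]; exact hcF N n
      have hb := row_bound (μ N) (fun k => X N n k) (fun k => hmeas N n k)
        (hrowindep N n) ε c hc' (mseq N)
      calc μ N {ω | ε < orderStat (fun k => X N n k ω) (mseq N)}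
          ≤ μ N {ω | ((Finset.univ.filter (fun k => X N n k ω ≤ ε)).card : ℝ) ≤ (mseq N : ℝ)} :=
            measure_mono hsub
        _ = ENNReal.ofReal ((μ N {ω | ((Finset.univ.filter
              (fun k => X N n k ω ≤ ε)).card : ℝ) ≤ (mseq N : ℝ)}).toReal) :=
            (ENNReal.ofReal_toReal (measure_ne_top _ _)).symm
        _ ≤ ENNReal.ofReal (Real.exp (mseq N) * Real.exp (-δ * N)) :=
            ENNReal.ofReal_le_ofReal hb
    calc μ N {ω | ∃ n : Fin N, ε < orderStat (fun k => X N n k ω) (mseq N)}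
        = μ N (⋃ n : Fin N, {ω | ε < orderStat (fun k => X N n k ω) (mseq N)}) := by
          rw [Set.setOf_exists]
      _ ≤ ∑' n : Fin N, μ N {ω | ε < orderStat (fun k => X N n k ω) (mseq N)} :=
          measure_iUnion_le _
      _ = ∑ n : Fin N, μ N {ω | ε < orderStat (fun k => X N n k ω) (mseq N)} :=
          tsum_fintype _
      _ ≤ ∑ _n : Fin N, ENNReal.ofReal (Real.exp (mseq N) * Real.exp (-δ * N)) :=
          Finset.sum_le_sum fun n _ => hrow n
      _ = ENNReal.ofReal (r N) := by
          rw [Finset.sum_const, Finset.card_univ, Fintype.card_fin, nsmul_eq_mul, hrdef,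
            ENNReal.ofReal_mul (Nat.cast_nonneg N), ENNReal.ofReal_natCast]
  -- Step 2: r tends to 0
  have hg : Tendsto (fun x : ℝ => x * Real.exp (-(δ/2) * x)) atTop (nhds 0) := by
    have hδ2 : 0 < δ/2 := half_pos hδ
    have h1 := Real.tendsto_pow_mul_exp_neg_atTop_nhds_zero 1
    have h2 : Tendsto (fun x : ℝ => (δ/2) * x) atTop atTop :=
      tendsto_id.const_mul_atTop hδ2
    have h3 := (h1.comp h2).const_mul (2/δ)
    rw [mul_zero] at h3
    convert h3 using 2 with x
    simp only [Function.comp_apply, pow_one]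
    rw [neg_mul]
    field_simp
  have hub : ∀ᶠ N in atTop, r N ≤ (N : ℝ) * Real.exp (-(δ/2) * N) := by
    have hev : ∀ᶠ N in atTop, (M N : ℝ) / N < δ/2 :=
      hM.eventually_lt_const (half_pos hδ)
    filter_upwards [hev, eventually_ge_atTop 1] with N h1 h2
    have hN : (0 : ℝ) < N := by exact_mod_cast h2
    have hMN : (M N : ℝ) < δ/2 * N := by
      rwa [div_lt_iff₀ hN] at h1
    have hms : (mseq N : ℝ) ≤ (M N : ℝ) := by exact_mod_cast (hm N).2
    have key : Real.exp (mseq N) * Real.exp (-δ * N) ≤ Real.exp (-(δ/2) * N) := by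
      rw [← Real.exp_add]
      apply Real.exp_le_exp.mpr
      nlinarith
    exact mul_le_mul_of_nonneg_left key hN.le
  have hr : Tendsto r atTop (nhds 0) := by
    refine squeeze_zero' ?_ hub (hg.comp tendsto_natCast_atTop_atTop)
    filter_upwards with N
    positivity
  have hofReal : Tendsto (fun N => ENNReal.ofReal (r N)) atTop (nhds 0) := by
    have := ENNReal.tendsto_ofReal (f := atTop) hr
    simpa using this
  exact tendsto_of_tendsto_of_tendsto_of_le_of_le tendsto_const_nhds hofReal
    (fun N => zero_le) hstep1
end

section
/- Fix an integer m ≥ 0 and ε > 0. For each N, let K = N and let the channel gains form an m-dependent frequency-selective channel in which each |h_{n,n,k}| has a continuous unbounded distribution. Suppose M ≥ (m+1)(e+ε)·ln N. Then for every r > 0, the probability that the M-FSIG possesses a pure Nash equilibrium with at least rN sharing users tends to 0 as N → ∞; equivalently, max_{a* ∈ P_e} N_c(a*)/N → 0 in probability as N → ∞ (with the maximum interpreted as 0 when the set P_e of pure Nash equilibria is empty). -/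
open MeasureTheory ProbabilityTheory Filter

/-- The channel gains `h` form an `m`-dependent frequency-selective channel:
(i) for fixed transmitter/receiver pair the gains over REs are identically distributed and
a.s. nonzero; (ii) gains of distinct pairs are mutually independent; (iii) for each pair the
family over REs is `m`-dependent. -/
structure MDepChannel {Ω : Type*} [MeasurableSpace Ω] (μ : Measure Ω) (m : ℕ) {N K : ℕ}
    (h : Fin N → Fin N → Fin K → Ω → ℂ) : Prop where
  meas : ∀ n1 n2 k, Measurable (h n1 n2 k)
  ident : ∀ n1 n2 k k', IdentDistrib (h n1 n2 k) (h n1 n2 k') μ μ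
  nonzero : ∀ n1 n2 k, ∀ᵐ ω ∂μ, h n1 n2 k ω ≠ 0
  indepPairs : iIndepFun
      (fun (p : Fin N × Fin N) ω => (fun k => h p.1 p.2 k ω)) μ
  mdep : ∀ n1 n2, MDepFam μ m (fun k => h n1 n2 k)

-- ===== auxiliary lemmas =====

lemma length_sortList {K : ℕ} (v : Fin K → ℝ) :
    ((Finset.univ.val.map v).sort (· ≤ ·)).length = K := by
  rw [Multiset.length_sort, Multiset.card_map]
  simp

lemma orderStat_mem {K : ℕ} (v : Fin K → ℝ) (j : ℕ) (hj : j - 1 < K) :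
    ∃ k, orderStat v j = v k := by
  have hlen := length_sortList v
  have hmem : orderStat v j ∈ ((Finset.univ.val.map v).sort (· ≤ ·)) := by
    rw [orderStat, List.getD_eq_getElem _ _ (by omega)]
    exact List.getElem_mem _
  rw [Multiset.mem_sort, Multiset.mem_map] at hmem
  obtain ⟨k, -, hk⟩ := hmem
  exact ⟨k, hk.symm⟩

lemma orderStat_count {K : ℕ} (v : Fin K → ℝ) (j : ℕ) (h1 : 1 ≤ j) (h2 : j ≤ K) :
    (K + 1 - j : ℕ) ≤ (Finset.univ.filter fun k => orderStat v j ≤ v k).card := by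
  classical
  set l := ((Finset.univ.val.map v).sort (· ≤ ·)) with hl
  have hlen : l.length = K := length_sortList v
  have hsort : l.Pairwise (· ≤ ·) := Multiset.pairwise_sort _ _
  have hij : j - 1 < l.length := by omega
  have hdrop : ∀ x ∈ l.drop (j-1), orderStat v j ≤ x := by
    intro x hx
    rw [List.mem_iff_getElem] at hx
    obtain ⟨i, hi, rfl⟩ := hx
    rw [List.getElem_drop]
    have hos : orderStat v j = l[j-1] := by
      rw [orderStat, ← hl, List.getD_eq_getElem _ _ hij]
    rw [hos]
    have hi' : j - 1 + i < l.length := by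
      rw [List.length_drop] at hi; omega
    exact List.Pairwise.rel_get_of_le hsort (a := ⟨j-1, hij⟩) (b := ⟨j-1+i, hi'⟩) (by simp [Fin.le_def])
  have hcount : (K + 1 - j : ℕ) ≤ l.countP (fun x => decide (orderStat v j ≤ x)) := by
    have hsub : (l.drop (j-1)).Sublist l := List.drop_sublist _ _
    have hfil : (l.drop (j-1)).countP (fun x => decide (orderStat v j ≤ x)) = (l.drop (j-1)).length := by
      rw [List.countP_eq_length]
      intro a ha; exact decide_eq_true (hdrop a ha)
    calc (K + 1 - j : ℕ) = (l.drop (j-1)).length := by rw [List.length_drop, hlen]; omega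
    _ = (l.drop (j-1)).countP _ := hfil.symm
    _ ≤ l.countP _ := hsub.countP_le
  have key : (Finset.univ.filter fun k => orderStat v j ≤ v k).card
      = l.countP (fun x => decide (orderStat v j ≤ x)) := by
    rw [Finset.card_def, Finset.filter_val, ← Multiset.countP_eq_card_filter,
      Multiset.countP_eq_card_filter,
      ← Multiset.countP_map v Finset.univ.val (fun x => orderStat v j ≤ x),
      ← Multiset.sort_eq (α := ℝ) (Finset.univ.val.map v) (· ≤ ·), Multiset.coe_countP]
  omega

lemma occ_bound {N : ℕ} (b : Fin N → Fin N) :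
    (numSharing b : ℝ) / 2 + ((Finset.univ.image b).card : ℝ) ≤ N := by
  classical
  simp only [numSharing]
  set Occ := Finset.univ.image b with hOcc
  set U := (Finset.univ.filter fun n => ∃ m, m ≠ n ∧ b m = b n) with hU
  have hNcard : (Finset.univ : Finset (Fin N)).card = ∑ k ∈ Occ, (Finset.univ.filter fun n => b n = k).card :=
    Finset.card_eq_sum_card_fiberwise (fun x _ => Finset.mem_image_of_mem b (Finset.mem_univ x))
  have hUcard : U.card = ∑ k ∈ Occ, (U.filter fun n => b n = k).card :=
    Finset.card_eq_sum_card_fiberwise (fun x _ => Finset.mem_image_of_mem b (Finset.mem_univ x))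
  have key : ∀ k ∈ Occ, ((U.filter fun n => b n = k).card : ℝ) / 2 + 1 ≤ ((Finset.univ.filter fun n => b n = k).card : ℝ) := by
    intro k hk
    set F := (Finset.univ.filter fun n => b n = k) with hF
    have hsub : (U.filter fun n => b n = k) ⊆ F := by
      intro n hn
      simp only [hF, Finset.mem_filter, Finset.mem_univ, true_and]
      exact (Finset.mem_filter.1 hn).2
    have hFpos : 1 ≤ F.card := by
      obtain ⟨n, -, hn⟩ := Finset.mem_image.1 hk
      exact Finset.card_pos.2 ⟨n, by simp [hF, hn]⟩
    by_cases h2 : 2 ≤ F.card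
    · have hle : (U.filter fun n => b n = k).card ≤ F.card := Finset.card_le_card hsub
      have h2' : (2 : ℝ) ≤ F.card := by exact_mod_cast h2
      have hle' : ((U.filter fun n => b n = k).card : ℝ) ≤ F.card := by exact_mod_cast hle
      nlinarith
    · have hF1 : F.card = 1 := by omega
      have hempty : (U.filter fun n => b n = k) = ∅ := by
        rw [Finset.eq_empty_iff_forall_notMem]
        intro n hn
        rw [Finset.mem_filter] at hn
        obtain ⟨hnU, hbn⟩ := hn
        rw [hU, Finset.mem_filter] at hnU
        obtain ⟨-, mm, hmm, hbm⟩ := hnU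
        have hnF : n ∈ F := by simp [hF, hbn]
        have hmF : mm ∈ F := by simp [hF, hbm.trans hbn]
        have hc := Finset.card_le_card (Finset.insert_subset hmF (Finset.singleton_subset_iff.2 hnF))
        rw [Finset.card_insert_of_notMem (by simp [hmm]), Finset.card_singleton] at hc
        omega
      rw [hempty]
      have : (1:ℝ) ≤ F.card := by exact_mod_cast hFpos
      simpa using this
  have hsum : (U.card : ℝ) / 2 + Occ.card ≤ ∑ k ∈ Occ, ((Finset.univ.filter fun n => b n = k).card : ℝ) := by
    calc (U.card : ℝ) / 2 + Occ.card
        = ∑ k ∈ Occ, (((U.filter fun n => b n = k).card : ℝ) / 2 + 1) := by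
          rw [Finset.sum_add_distrib, ← Finset.sum_div]
          push_cast [hUcard]
          simp
      _ ≤ _ := Finset.sum_le_sum key
  have heq : ((Finset.univ : Finset (Fin N)).card : ℝ) = ∑ k ∈ Occ, ((Finset.univ.filter fun n => b n = k).card : ℝ) := by
    push_cast [hNcard]; rfl
  rw [← heq] at hsum
  simpa using hsum

lemma pigeonhole_res (mm : ℕ) {N : ℕ} (B : Finset (Fin N)) :
    ∃ g, (B.card : ℝ) / (mm + 1) ≤ ((B.filter fun k => k.val % (mm+1) = g).card : ℝ) := by
  classical
  have hcard : B.card = ∑ g ∈ Finset.range (mm+1), (B.filter fun k => k.val % (mm+1) = g).card :=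
    Finset.card_eq_sum_card_fiberwise (f := fun k : Fin N => k.val % (mm+1))
      (fun x _ => Finset.mem_range.2 (Nat.mod_lt _ (Nat.succ_pos mm)))
  by_contra hc
  push_neg at hc
  have hall : ∀ g ∈ Finset.range (mm+1), ((B.filter fun k => k.val % (mm+1) = g).card : ℝ) < (B.card : ℝ)/(mm+1) := fun g _ => hc g
  have hlt : (B.card : ℝ) < ((mm:ℝ)+1) * ((B.card : ℝ)/((mm:ℝ)+1)) := by
    calc (B.card : ℝ) = ∑ g ∈ Finset.range (mm+1), ((B.filter fun k => k.val % (mm+1) = g).card : ℝ) := by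
          push_cast [hcard]; rfl
    _ < ∑ g ∈ Finset.range (mm+1), (B.card : ℝ)/((mm:ℝ)+1) := by
          apply Finset.sum_lt_sum_of_nonempty ⟨0, Finset.mem_range.2 (Nat.succ_pos mm)⟩ hall
    _ = ((mm:ℝ)+1) * ((B.card : ℝ)/((mm:ℝ)+1)) := by
          rw [Finset.sum_const, Finset.card_range]; push_cast; ring
  rw [mul_div_cancel₀] at hlt
  · exact lt_irrefl _ hlt
  · positivity

lemma det_lemma {N : ℕ} (h : Fin N → Fin N → Fin N → ℂ) (P : Fin N → ℝ) (N0 : ℝ)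
    (hN0 : 0 < N0) (hP : ∀ n, 0 < P n) (M : ℕ) (hM1 : 1 ≤ M) (hN1 : 1 ≤ N)
    (hnz : ∀ m n k, h m n k ≠ 0)
    (b : Fin N → Fin N) (hb : IsPNE (fun c n => mfsigUtil h P N0 M c n) b)
    (n : Fin N) (hn : ∃ m, m ≠ n ∧ b m = b n)
    (k : Fin N) (hk : orderStat (fun k => ‖h n n k‖) (N - M + 1) ≤ ‖h n n k‖) :
    ∃ m, m ≠ n ∧ b m = k := by
  classical
  by_contra hocc
  push_neg at hocc
  set σ := orderStat (fun k => ‖h n n k‖) (N - M + 1) with hσ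
  have hσpos : 0 < σ := by
    obtain ⟨k0, hk0⟩ := orderStat_mem (fun k => ‖h n n k‖) (N - M + 1) (by omega)
    rw [hσ, hk0]
    exact norm_pos_iff.2 (hnz n n k0)
  obtain ⟨m0, hm0, hbm0⟩ := hn
  have hI0 : 0 < interf h P b n (b n) := by
    apply Finset.sum_pos'
    · intro i _; exact mul_nonneg (sq_nonneg _) (hP i).le
    · exact ⟨m0, by simp [hm0, hbm0],
        mul_pos (pow_pos (norm_pos_iff.2 (hnz m0 n (b n))) 2) (hP m0)⟩
  have hIdev : interf h P (Function.update b n k) n k = 0 := by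
    rw [interf]
    apply Finset.sum_eq_zero
    intro i hi
    rw [Finset.mem_filter] at hi
    obtain ⟨-, hin, hik⟩ := hi
    rw [Function.update_of_ne hin] at hik
    exact absurd hik (hocc i hin)
  have hdev : mfsigUtil h P N0 M (Function.update b n k) n
      = Real.logb 2 (1 + P n * σ ^ 2 / N0) := by
    rw [mfsigUtil, if_pos]
    · rw [show (Function.update b n k) n = k from Function.update_self n k b, hIdev, add_zero, ← hσ]
    · rw [show (Function.update b n k) n = k from Function.update_self n k b, ← hσ]
      exact hk
  have hcur : mfsigUtil h P N0 M b n ≤ Real.logb 2 (1 + P n * σ ^ 2 / (N0 + interf h P b n (b n))) := by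
    rw [mfsigUtil, ← hσ]
    split
    · exact le_refl _
    · apply Real.logb_nonneg one_lt_two
      have hIb : 0 ≤ interf h P b n (b n) := interf_nonneg h P hP b n (b n)
      have h1 : 0 ≤ P n * σ ^ 2 / (N0 + interf h P b n (b n)) :=
        div_nonneg (mul_nonneg (hP n).le (sq_nonneg σ)) (by linarith)
      linarith
  have hlt : Real.logb 2 (1 + P n * σ ^ 2 / (N0 + interf h P b n (b n))) < Real.logb 2 (1 + P n * σ ^ 2 / N0) := by
    apply Real.logb_lt_logb one_lt_two
    · have hIb : 0 ≤ interf h P b n (b n) := interf_nonneg h P hP b n (b n)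
      have : 0 ≤ P n * σ ^ 2 / (N0 + interf h P b n (b n)) :=
        div_nonneg (mul_nonneg (hP n).le (sq_nonneg σ)) (by linarith)
      linarith
    · have hnum : 0 < P n * σ ^ 2 := mul_pos (hP n) (pow_pos hσpos 2)
      have := div_lt_div_of_pos_left hnum hN0 (by linarith : N0 < N0 + interf h P b n (b n))
      linarith
  have := hb n k
  simp only at this
  rw [hdev] at this
  linarith

set_option maxHeartbeats 3000000

open scoped Classical in
lemma spaced_prod {Ω : Type*} [MeasurableSpace Ω] (μ : Measure Ω) (m : ℕ) {K : ℕ}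
    (X : Fin K → Ω → ℂ) (hdep : MDepFam μ m X) (B : Finset (Fin K))
    (hB : ∀ i ∈ B, ∀ j ∈ B, i ≠ j → (m : ℤ) < |(i : ℤ) - (j : ℤ)|) (t : ℝ) :
    μ (⋂ b ∈ B, {ω | ‖X b ω‖ ≤ t}) = ∏ b ∈ B, μ {ω | ‖X b ω‖ ≤ t} := by
  classical
  have hind := hdep B hB
  rw [ProbabilityTheory.iIndepFun_iff_measure_inter_preimage_eq_mul] at hind
  have hmeas : ∀ (i : B), i ∈ (Finset.univ : Finset B) →
      MeasurableSet ((fun _ : B => {z : ℂ | ‖z‖ ≤ t}) i) := by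
    intro i _
    exact measurableSet_le (continuous_norm.measurable) measurable_const
  have key := hind Finset.univ hmeas
  have hset : (⋂ i ∈ (Finset.univ : Finset B), (X i.1) ⁻¹' {z : ℂ | ‖z‖ ≤ t})
      = ⋂ b ∈ B, {ω | ‖X b ω‖ ≤ t} := by
    ext ω
    simp [Set.mem_iInter]
  have hprod : ∏ i ∈ (Finset.univ : Finset B), μ ((X i.1) ⁻¹' {z : ℂ | ‖z‖ ≤ t})
      = ∏ b ∈ B, μ {ω | ‖X b ω‖ ≤ t} := by
    rw [← Finset.prod_coe_sort B (fun b => μ {ω | ‖X b ω‖ ≤ t})]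
    rfl
  rw [hset, hprod] at key
  exact key

open scoped Classical in
lemma markov_count {Ω : Type*} [MeasurableSpace Ω] (μ : Measure Ω) {K : ℕ}
    (A : Fin K → Set Ω) (hA : ∀ k, MeasurableSet (A k)) (Ms : ℕ) (hMs : 1 ≤ Ms) :
    μ {ω | Ms ≤ (Finset.univ.filter fun k => ω ∈ A k).card} ≤ (∑ k, μ (A k)) / Ms := by
  classical
  set f : Ω → ENNReal := fun ω => ∑ k, (A k).indicator (fun _ => 1) ω with hf
  have hfmeas : Measurable f := by
    apply Finset.measurable_sum
    intro k _
    exact (measurable_const.indicator (hA k))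
  have hint : ∫⁻ ω, f ω ∂μ = ∑ k, μ (A k) := by
    rw [hf]
    rw [MeasureTheory.lintegral_finset_sum]
    · apply Finset.sum_congr rfl
      intro k _
      rw [MeasureTheory.lintegral_indicator_const (hA k)]
      simp
    · intro k _
      exact measurable_const.indicator (hA k)
  have hsub : {ω | Ms ≤ (Finset.univ.filter fun k => ω ∈ A k).card} ⊆ {ω | (Ms : ENNReal) ≤ f ω} := by
    intro ω hω
    simp only [Set.mem_setOf_eq] at hω ⊢
    have hfω : f ω = ((Finset.univ.filter fun k => ω ∈ A k).card : ENNReal) := by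
      rw [hf]
      simp only [Set.indicator_apply]
      rw [Finset.sum_boole]
    rw [hfω]
    exact_mod_cast hω
  calc μ _ ≤ μ {ω | (Ms : ENNReal) ≤ f ω} := measure_mono hsub
  _ ≤ (∫⁻ ω, f ω ∂μ) / Ms := by
      rw [ENNReal.le_div_iff_mul_le (Or.inl (by simp; omega)) (Or.inl (by simp))]
      rw [mul_comm]
      exact MeasureTheory.mul_meas_ge_le_lintegral₀ hfmeas.aemeasurable _
  _ = (∑ k, μ (A k)) / Ms := by rw [hint]

lemma users_indep {Ω : Type*} [MeasurableSpace Ω] (μ : Measure Ω) {N K : ℕ}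
    (h : Fin N → Fin N → Fin K → Ω → ℂ)
    (hind : iIndepFun
      (fun (p : Fin N × Fin N) ω => (fun k => h p.1 p.2 k ω)) μ)
    (U : Finset (Fin N)) (S : Fin N → Set (Fin K → ℂ)) (hS : ∀ n, MeasurableSet (S n)) :
    μ (⋂ n ∈ U, (fun ω (k : Fin K) => h n n k ω) ⁻¹' (S n))
      = ∏ n ∈ U, μ ((fun ω (k : Fin K) => h n n k ω) ⁻¹' (S n)) := by
  classical
  rw [ProbabilityTheory.iIndepFun_iff_measure_inter_preimage_eq_mul] at hind
  set sets : (Fin N × Fin N) → Set (Fin K → ℂ) := fun p => if p.1 = p.2 then S p.1 else Set.univ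
    with hsets
  have hmeas : ∀ p ∈ U.image (fun n => (n, n)), MeasurableSet (sets p) := by
    intro p _
    rw [hsets]
    dsimp only
    split
    · exact hS p.1
    · exact MeasurableSet.univ
  have key := hind (U.image fun n => (n, n)) hmeas
  have hinj : ∀ x ∈ U, ∀ y ∈ U, (fun n : Fin N => (n, n)) x = (fun n : Fin N => (n, n)) y → x = y := by
    intro x _ y _ hxy
    simpa using hxy
  have hset : (⋂ p ∈ U.image (fun n => (n, n)),
      (fun ω (k : Fin K) => h p.1 p.2 k ω) ⁻¹' sets p)
      = ⋂ n ∈ U, (fun ω (k : Fin K) => h n n k ω) ⁻¹' (S n) := by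
    ext ω
    simp only [Set.mem_iInter, Finset.mem_image]
    constructor
    · intro hp n hn
      have := hp (n, n) ⟨n, hn, rfl⟩
      simpa [hsets] using this
    · rintro hn p ⟨n, hnU, rfl⟩
      simpa [hsets] using hn n hnU
  have hprod : ∏ p ∈ U.image (fun n => (n, n)),
      μ ((fun ω (k : Fin K) => h p.1 p.2 k ω) ⁻¹' sets p)
      = ∏ n ∈ U, μ ((fun ω (k : Fin K) => h n n k ω) ⁻¹' (S n)) := by
    rw [Finset.prod_image hinj]
    apply Finset.prod_congr rfl
    intro n _
    simp [hsets]
  rw [hset, hprod] at key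
  exact key

lemma exists_t {Ω : Type*} [MeasurableSpace Ω] (μ : Measure Ω) [IsProbabilityMeasure μ]
    (X : Ω → ℝ) (hXnn : ∀ ω, 0 ≤ X ω)
    (hcont : Continuous (cdfOf μ X)) (θ : ℝ) (hθ0 : 0 < θ) (hθ1 : θ ≤ 1) :
    ∃ t, cdfOf μ X t = 1 - θ := by
  have hF0 : cdfOf μ X (-1) = 0 := by
    rw [cdfOf]
    have : {ω | X ω ≤ -1} = ∅ := by
      ext ω; simp only [Set.mem_setOf_eq, Set.mem_empty_iff_false, iff_false, not_le]
      linarith [hXnn ω]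
    rw [this, measure_empty]
    simp
  have hmono : Monotone (fun j : ℕ => {ω | X ω ≤ (j : ℝ)}) := by
    intro i j hij ω hω
    simp only [Set.mem_setOf_eq] at hω ⊢
    exact hω.trans (by exact_mod_cast hij)
  have hU : (⋃ j : ℕ, {ω | X ω ≤ (j : ℝ)}) = Set.univ := by
    ext ω
    simp only [Set.mem_iUnion, Set.mem_setOf_eq, Set.mem_univ, iff_true]
    obtain ⟨j, hj⟩ := exists_nat_ge (X ω)
    exact ⟨j, hj⟩
  have htend : Tendsto (fun j : ℕ => μ {ω | X ω ≤ (j : ℝ)}) atTop (nhds 1) := by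
    have := tendsto_measure_iUnion_atTop (μ := μ) hmono
    rw [hU] at this
    simpa [measure_univ, Function.comp_def] using this
  have htoReal : Tendsto (fun j : ℕ => cdfOf μ X (j : ℝ)) atTop (nhds 1) := by
    have h1 : (1 : ENNReal) ≠ ⊤ := by simp
    have := (ENNReal.tendsto_toReal h1).comp htend
    simpa [cdfOf, Function.comp_def] using this
  have hev : ∀ᶠ j : ℕ in atTop, 1 - θ ≤ cdfOf μ X (j : ℝ) := by
    have hlt : 1 - θ < 1 := by linarith
    exact htoReal.eventually (eventually_ge_nhds hlt)
  obtain ⟨j, hj⟩ := hev.exists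
  have hle : (-1 : ℝ) ≤ (j : ℝ) := by linarith [Nat.cast_nonneg (α := ℝ) j]
  have hIcc := intermediate_value_Icc hle hcont.continuousOn
  have hymem : (1 - θ) ∈ Set.Icc (cdfOf μ X (-1)) (cdfOf μ X (j : ℝ)) := by
    rw [hF0]
    exact ⟨by linarith, hj⟩
  obtain ⟨t, -, ht⟩ := hIcc hymem
  exact ⟨t, ht⟩

lemma measurable_D1 {K : ℕ} (B' : Finset (Fin K)) (t : ℝ) :
    MeasurableSet {v : Fin K → ℂ | ∀ b ∈ B', ‖v b‖ ≤ t} := by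
  have : {v : Fin K → ℂ | ∀ b ∈ B', ‖v b‖ ≤ t}
      = ⋂ b ∈ B', (fun v : Fin K → ℂ => ‖v b‖) ⁻¹' (Set.Iic t) := by
    ext v; simp [Set.mem_iInter]
  rw [this]
  exact MeasurableSet.biInter B'.countable_toSet (fun b _ =>
    (continuous_norm.measurable.comp (measurable_pi_apply b)) measurableSet_Iic)

open scoped Classical in
lemma measurable_D2 {K : ℕ} (t : ℝ) (Ms : ℕ) :
    MeasurableSet {v : Fin K → ℂ | Ms ≤ (Finset.univ.filter fun k => t < ‖v k‖).card} := by
  have : {v : Fin K → ℂ | Ms ≤ (Finset.univ.filter fun k => t < ‖v k‖).card}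
      = ⋃ S ∈ (Finset.univ.powerset.filter fun S : Finset (Fin K) => Ms ≤ S.card),
          ⋂ k ∈ S, (fun v : Fin K → ℂ => ‖v k‖) ⁻¹' (Set.Ioi t) := by
    ext v
    simp only [Set.mem_setOf_eq, Set.mem_iUnion, Set.mem_iInter, Finset.mem_filter,
      Finset.mem_powerset, Set.mem_preimage, Set.mem_Ioi]
    constructor
    · intro hcard
      exact ⟨Finset.univ.filter fun k => t < ‖v k‖,
        ⟨Finset.filter_subset _ _, hcard⟩, fun k hk => (Finset.mem_filter.1 hk).2⟩
    · rintro ⟨S, ⟨-, hcard⟩, hall⟩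
      refine le_trans hcard (Finset.card_le_card ?_)
      intro k hk
      exact Finset.mem_filter.2 ⟨Finset.mem_univ k, hall k hk⟩
  rw [this]
  exact MeasurableSet.biUnion (Finset.countable_toSet _) (fun S _ =>
    MeasurableSet.biInter S.countable_toSet (fun k _ =>
      (continuous_norm.measurable.comp (measurable_pi_apply k)) measurableSet_Ioi))

lemma spacing_res {K mm : ℕ} (B : Finset (Fin K)) (g : ℕ) :
    ∀ i ∈ B.filter (fun k => k.val % (mm+1) = g), ∀ j ∈ B.filter (fun k => k.val % (mm+1) = g),
      i ≠ j → (mm : ℤ) < |(i : ℤ) - (j : ℤ)| := by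
  intro i hi j hj hij
  rw [Finset.mem_filter] at hi hj
  have hmod : i.val % (mm+1) = j.val % (mm+1) := hi.2.trans hj.2.symm
  have hmodeq : Nat.ModEq (mm+1) i.val j.val := hmod
  have hdvd : ((mm+1 : ℕ) : ℤ) ∣ ((j.val : ℤ) - (i.val : ℤ)) := hmodeq.dvd
  have hdvd' : ((mm+1 : ℕ) : ℤ) ∣ ((i : ℤ) - (j : ℤ)) := by
    have : ((i : ℤ) - (j : ℤ)) = -((j.val : ℤ) - (i.val : ℤ)) := by push_cast; ring
    rw [this]; exact hdvd.neg_right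
  have hne : ((i : ℤ) - (j : ℤ)) ≠ 0 := by
    intro hc
    apply hij
    have : (i : ℤ) = (j : ℤ) := by linarith [sub_eq_zero.1 hc]
    exact Fin.ext (by exact_mod_cast this)
  have hle := Int.le_of_dvd (abs_pos.2 hne) ((dvd_abs _ _).2 hdvd')
  have : ((mm:ℤ)+1) ≤ |(i : ℤ) - (j : ℤ)| := by push_cast at hle ⊢; linarith
  linarith

/-- for an `m`-dependent frequency-selective channel with continuous unbounded
direct-gain distributions and `M ≥ (m+1)(e+ε) ln N`, for every `r > 0` the probability that
the M-FSIG has a pure Nash equilibrium with at least `rN` sharing users tends to `0`. -/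
theorem stmt_6 (m : ℕ) (ε : ℝ) (hε : 0 < ε)
    (Ω : ℕ → Type) (inst : ∀ N, MeasurableSpace (Ω N))
    (μ : ∀ N, Measure (Ω N)) (hprob : ∀ N, IsProbabilityMeasure (μ N))
    (h : ∀ N, Fin N → Fin N → Fin N → Ω N → ℂ)
    (hch : ∀ N, MDepChannel (μ N) m (h N))
    (hcont : ∀ N (n k : Fin N),
      Continuous (cdfOf (μ N) (fun ω => ‖h N n n k ω‖)))
    (hunb : ∀ N (n k : Fin N), ∀ x : ℝ,
      cdfOf (μ N) (fun ω => ‖h N n n k ω‖) x < 1)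
    (P : ∀ N, Fin N → ℝ) (hP : ∀ N n, 0 < P N n)
    (N0 : ℝ) (hN0 : 0 < N0)
    (M : ℕ → ℕ)
    (hM : ∀ N : ℕ, ((m : ℝ) + 1) * (Real.exp 1 + ε) * Real.log N ≤ M N)
    (r : ℝ) (hr : 0 < r) :
    Tendsto (fun N => μ N {ω | ∃ b : Fin N → Fin N,
        IsPNE (fun c n => mfsigUtil (fun m' n' k => h N m' n' k ω) (P N) N0 (M N) c n) b ∧
        r * N ≤ (numSharing b : ℝ)})
      atTop (nhds 0) := by
  classical
  have _inst : ∀ N, IsProbabilityMeasure (μ N) := hprob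
  -- reduced sharing fraction
  set r' : ℝ := min r (1/2) with hr'def
  have hr'0 : 0 < r' := lt_min hr (by norm_num)
  have hr'half : r' ≤ 1/2 := min_le_right _ _
  have hr'r : r' ≤ r := min_le_left _ _
  -- constants
  set p : ℝ := Real.exp (-(3 / r')) with hpdef
  have hp0 : 0 < p := Real.exp_pos _
  have hp1 : p < 1 := by
    rw [hpdef, Real.exp_lt_one_iff]
    have : 0 < 3 / r' := by positivity
    linarith
  set L : ℝ := Real.log 2 + 3 / r' with hLdef
  have hL0 : 0 < L := by
    have := Real.log_pos (by norm_num : (1:ℝ) < 2)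
    have : 0 < 3 / r' := by positivity
    rw [hLdef]
    have := Real.log_pos (by norm_num : (1:ℝ) < 2)
    linarith
  set c : ℝ := 2 * ((m:ℝ)+1) * L / r' with hcdef
  have hc0 : 0 < c := by
    rw [hcdef]; positivity
  set q : ℝ := 4 * Real.exp (-3) with hqdef
  have hq0 : 0 ≤ q := by rw [hqdef]; positivity
  have hexp1 : (2:ℝ) ≤ Real.exp 1 := by linarith [Real.add_one_le_exp 1]
  have hexp3 : (8:ℝ) ≤ Real.exp 3 := by
    have h3 : Real.exp 3 = Real.exp 1 * Real.exp 1 * Real.exp 1 := by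
      rw [← Real.exp_add, ← Real.exp_add]; norm_num
    rw [h3]
    nlinarith [Real.exp_pos 1]
  have hq1 : q < 1 := by
    have hinv : Real.exp (-3) ≤ 1/8 := by
      rw [Real.exp_neg]
      rw [inv_le_comm₀ (Real.exp_pos 3) (by norm_num)]
      linarith
    rw [hqdef]
    linarith
  -- eventual facts about N
  have hlogT : Tendsto (fun N : ℕ => ((m:ℝ)+1) * (Real.exp 1 + ε) * Real.log N) atTop atTop := by
    apply Tendsto.const_mul_atTop (by positivity : (0:ℝ) < ((m:ℝ)+1)*(Real.exp 1 + ε))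
    exact Real.tendsto_log_atTop.comp tendsto_natCast_atTop_atTop
  have hMev : ∀ᶠ N : ℕ in atTop, max (2*c/p) 1 ≤ (M N : ℝ) := by
    filter_upwards [hlogT.eventually_ge_atTop (max (2*c/p) 1)] with N hN
    exact le_trans hN (hM N)
  have hNev1 : ∀ᶠ N : ℕ in atTop, max (2*c/p) 1 ≤ (N : ℝ) :=
    tendsto_natCast_atTop_atTop.eventually_ge_atTop _
  have hNev2 : ∀ᶠ N : ℕ in atTop, c ≤ (N : ℝ) :=
    tendsto_natCast_atTop_atTop.eventually_ge_atTop _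
  have hNev3 : ∀ᶠ N : ℕ in atTop, 2 ≤ N := eventually_ge_atTop 2
  -- the key eventual bound
  have key : ∀ᶠ N : ℕ in atTop, μ N {ω | ∃ b : Fin N → Fin N,
      IsPNE (fun c n => mfsigUtil (fun m' n' k => h N m' n' k ω) (P N) N0 (M N) c n) b ∧
      r * N ≤ (numSharing b : ℝ)} ≤ ENNReal.ofReal (q ^ N) := by
    filter_upwards [hMev, hNev1, hNev2, hNev3] with N hMN hN1' hNc h2N
    have hN1 : 1 ≤ N := by omega
    have hNR : (0:ℝ) < N := by
      have : (0:ℕ) < N := by omega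
      exact_mod_cast this
    have hM1 : 1 ≤ M N := by
      have : (1:ℝ) ≤ (M N : ℝ) := le_trans (le_max_right _ _) hMN
      exact_mod_cast this
    set θ : ℝ := c / N with hθdef
    have hθ0 : 0 < θ := by rw [hθdef]; positivity
    have hθ1 : θ ≤ 1 := by
      rw [hθdef, div_le_one hNR]; exact hNc
    set Ms : ℕ := min (M N) N with hMsdef
    have hMs1 : 1 ≤ Ms := le_min hM1 hN1
    have hMsR : 2*c/p ≤ (Ms:ℝ) := by
      have h1 : 2*c/p ≤ (M N : ℝ) := le_trans (le_max_left _ _) hMN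
      have h2 : 2*c/p ≤ (N : ℝ) := le_trans (le_max_left _ _) hN1'
      rw [hMsdef]
      push_cast [Nat.cast_min]
      exact le_min h1 h2
    set k0 : Fin N := ⟨0, by omega⟩ with hk0def
    -- thresholds
    have hts : ∀ n : Fin N, ∃ t, cdfOf (μ N) (fun ω => ‖h N n n k0 ω‖) t = 1 - θ :=
      fun n => exists_t (μ N) _ (fun ω => norm_nonneg _) (hcont N n k0) θ hθ0 hθ1
    choose t ht using hts
    -- cdf values
    have hcdf : ∀ n k : Fin N, μ N {ω | ‖h N n n k ω‖ ≤ t n} = ENNReal.ofReal (1 - θ) := by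
      intro n k
      have hzm : MeasurableSet {z : ℂ | ‖z‖ ≤ t n} :=
        measurableSet_le continuous_norm.measurable measurable_const
      have heq : μ N {ω | ‖h N n n k ω‖ ≤ t n}
          = μ N {ω | ‖h N n n k0 ω‖ ≤ t n} := by
        have e1 : {ω | ‖h N n n k ω‖ ≤ t n} = (h N n n k) ⁻¹' {z : ℂ | ‖z‖ ≤ t n} := rfl
        have e2 : {ω | ‖h N n n k0 ω‖ ≤ t n} = (h N n n k0) ⁻¹' {z : ℂ | ‖z‖ ≤ t n} := rfl
        rw [e1, e2, ← Measure.map_apply ((hch N).meas n n k) hzm,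
          ← Measure.map_apply ((hch N).meas n n k0) hzm, ((hch N).ident n n k k0).map_eq]
      rw [heq]
      have hcv := ht n
      rw [cdfOf] at hcv
      rw [← hcv, ENNReal.ofReal_toReal (measure_ne_top _ _)]
    have hcdfc : ∀ n k : Fin N, μ N {ω | t n < ‖h N n n k ω‖} = ENNReal.ofReal θ := by
      intro n k
      have hmeasset : MeasurableSet {ω | ‖h N n n k ω‖ ≤ t n} :=
        measurableSet_le (continuous_norm.measurable.comp ((hch N).meas n n k)) measurable_const
      have hcompl : {ω | t n < ‖h N n n k ω‖} = {ω | ‖h N n n k ω‖ ≤ t n}ᶜ := by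
        ext ω; simp [not_le]
      rw [hcompl, prob_compl_eq_one_sub hmeasset, hcdf n k, ← ENNReal.ofReal_one,
        ← ENNReal.ofReal_sub _ (by linarith : (0:ℝ) ≤ 1 - θ)]
      norm_num
    -- residue class choice for each O
    have hBigB : ∀ O : Finset (Fin N), ∃ g,
        ((Oᶜ.card : ℝ)/((m:ℝ)+1) ≤ ((Oᶜ.filter fun k => k.val % (m+1) = g).card : ℝ)) := by
      intro O
      obtain ⟨g, hg⟩ := pigeonhole_res m (Oᶜ)
      exact ⟨g, by exact_mod_cast hg⟩
    choose gO hgO using hBigB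
    set B' : Finset (Fin N) → Finset (Fin N) := fun O => Oᶜ.filter fun k => k.val % (m+1) = gO O
      with hB'def
    set Sn : Finset (Fin N) → Fin N → Set (Fin N → ℂ) := fun O n =>
      {v | ∀ b ∈ B' O, ‖v b‖ ≤ t n}
        ∪ {v | Ms ≤ (Finset.univ.filter fun k => t n < ‖v k‖).card} with hSndef
    have hSnMeas : ∀ O n, MeasurableSet (Sn O n) := fun O n =>
      (measurable_D1 _ _).union (measurable_D2 _ _)
    -- per-user bound
    have huser : ∀ O : Finset (Fin N), (r' * N / 2 ≤ (Oᶜ.card : ℝ)) → ∀ n : Fin N,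
        μ N ((fun ω (k : Fin N) => h N n n k ω) ⁻¹' Sn O n) ≤ ENNReal.ofReal p := by
      intro O hO n
      have hsplit : (fun ω (k : Fin N) => h N n n k ω) ⁻¹' Sn O n
          = (⋂ b ∈ B' O, {ω | ‖h N n n b ω‖ ≤ t n})
            ∪ {ω | Ms ≤ (Finset.univ.filter fun k => t n < ‖h N n n k ω‖).card} := by
        ext ω
        simp only [hSndef, Set.mem_preimage, Set.mem_union, Set.mem_setOf_eq, Set.mem_iInter]
      rw [hsplit]
      refine le_trans (measure_union_le _ _) ?_
      have hcardB' : r' * N / (2*((m:ℝ)+1)) ≤ ((B' O).card : ℝ) := by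
        refine le_trans ?_ (hgO O)
        rw [div_le_div_iff₀ (by positivity) (by positivity)]
        ring_nf
        nlinarith [hO]
      have hD1 : μ N (⋂ b ∈ B' O, {ω | ‖h N n n b ω‖ ≤ t n}) ≤ ENNReal.ofReal (p/2) := by
        rw [spaced_prod (μ N) m (fun k => h N n n k) ((hch N).mdep n n) (B' O)
          (spacing_res (Oᶜ) (gO O)) (t n)]
        rw [Finset.prod_congr rfl (fun b _ => hcdf n b), Finset.prod_const,
          ← ENNReal.ofReal_pow (by linarith)]
        apply ENNReal.ofReal_le_ofReal
        have hexpb : ∀ x : ℕ, (1-θ)^x ≤ Real.exp (-θ * x) := by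
          intro x
          calc (1-θ)^x ≤ (Real.exp (-θ))^x := by
                apply pow_le_pow_left₀ (by linarith)
                linarith [Real.add_one_le_exp (-θ)]
          _ = Real.exp (-θ * x) := by
                rw [← Real.exp_nat_mul]; ring_nf
        refine le_trans (hexpb _) ?_
        have hLle : L ≤ θ * ((B' O).card : ℝ) := by
          have hkey : θ * (r' * N / (2*((m:ℝ)+1))) = L := by
            rw [hθdef, hcdef]
            field_simp
          calc L = θ * (r' * N / (2*((m:ℝ)+1))) := hkey.symm
          _ ≤ θ * ((B' O).card : ℝ) := by
                apply mul_le_mul_of_nonneg_left hcardB' hθ0.le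
        calc Real.exp (-θ * ((B' O).card : ℝ)) ≤ Real.exp (-L) := by
              apply Real.exp_le_exp.2; linarith
        _ = p / 2 := by
              rw [hLdef, hpdef, neg_add, Real.exp_add]
              rw [Real.exp_neg, Real.exp_log (by norm_num : (0:ℝ) < 2)]
              ring
      have hD2 : μ N {ω | Ms ≤ (Finset.univ.filter fun k => t n < ‖h N n n k ω‖).card}
          ≤ ENNReal.ofReal (p/2) := by
        have hmk := markov_count (μ N) (fun k => {ω | t n < ‖h N n n k ω‖})
          (fun k => measurableSet_lt measurable_const
            (continuous_norm.measurable.comp ((hch N).meas n n k))) Ms hMs1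
        refine le_trans hmk ?_
        have hsum : (∑ k : Fin N, μ N {ω | t n < ‖h N n n k ω‖})
            = (N : ENNReal) * ENNReal.ofReal θ := by
          rw [Finset.sum_congr rfl (fun k _ => hcdfc n k), Finset.sum_const, Finset.card_univ,
            Fintype.card_fin, nsmul_eq_mul]
        rw [hsum]
        have h1 : (N:ENNReal) * ENNReal.ofReal θ = ENNReal.ofReal c := by
          rw [← ENNReal.ofReal_natCast N, ← ENNReal.ofReal_mul (Nat.cast_nonneg N)]
          congr 1
          rw [hθdef]
          field_simp
        rw [h1, ← ENNReal.ofReal_natCast Ms, ← ENNReal.ofReal_div_of_pos (by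
          have : (0:ℕ) < Ms := hMs1
          exact_mod_cast this)]
        apply ENNReal.ofReal_le_ofReal
        rw [div_le_iff₀ (by
          have : (0:ℕ) < Ms := hMs1
          exact_mod_cast this)]
        have hMsp : p/2 * (2*c/p) ≤ p/2 * (Ms:ℝ) :=
          mul_le_mul_of_nonneg_left hMsR (by positivity)
        have : p/2 * (2*c/p) = c := by field_simp
        nlinarith
      refine le_trans (add_le_add hD1 hD2) (le_of_eq ?_)
      rw [← ENNReal.ofReal_add (by positivity) (by positivity)]
      norm_num
    -- null set of zero gains
    set A : Set (Ω N) := {ω | ∀ m' n' k' : Fin N, h N m' n' k' ω ≠ 0} with hAdef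
    have hAnull : μ N Aᶜ = 0 := by
      have hsub : Aᶜ ⊆ ⋃ (m' : Fin N) (n' : Fin N) (k' : Fin N), {ω | h N m' n' k' ω = 0} := by
        intro ω hω
        simp only [hAdef, Set.mem_compl_iff, Set.mem_setOf_eq, not_forall, not_not] at hω
        obtain ⟨m', n', k', hz⟩ := hω
        exact Set.mem_iUnion.2 ⟨m', Set.mem_iUnion.2 ⟨n', Set.mem_iUnion.2 ⟨k', hz⟩⟩⟩
      refine measure_mono_null hsub ?_
      refine measure_iUnion_null fun m' => measure_iUnion_null fun n' => measure_iUnion_null fun k' => ?_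
      have hae := (hch N).nonzero m' n' k'
      rw [ae_iff] at hae
      simpa using hae
    -- index families
    set 𝒮 : Finset (Finset (Fin N)) :=
      Finset.univ.powerset.filter fun O => r' * N / 2 ≤ (Oᶜ.card : ℝ) with h𝒮def
    set 𝒰 : Finset (Finset (Fin N)) :=
      Finset.univ.powerset.filter fun U => r' * N ≤ (U.card : ℝ) with h𝒰def
    -- main inclusion
    have hincl : {ω | ∃ b : Fin N → Fin N,
        IsPNE (fun c n => mfsigUtil (fun m' n' k => h N m' n' k ω) (P N) N0 (M N) c n) b ∧
        r * N ≤ (numSharing b : ℝ)}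
        ⊆ Aᶜ ∪ ⋃ O ∈ 𝒮, ⋃ U ∈ 𝒰, ⋂ n ∈ U, (fun ω (k : Fin N) => h N n n k ω) ⁻¹' Sn O n := by
      intro ω hω
      by_cases hA : ω ∈ A
      case neg => exact Or.inl hA
      obtain ⟨b, hPNE, hshare⟩ := hω
      have hshare' : r' * N ≤ (numSharing b : ℝ) :=
        le_trans (mul_le_mul_of_nonneg_right hr'r (Nat.cast_nonneg N)) hshare
      right
      set O : Finset (Fin N) := Finset.univ.image b with hOdef
      set U : Finset (Fin N) := Finset.univ.filter fun n => ∃ m', m' ≠ n ∧ b m' = b n with hUdef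
      have hUcard : (U.card : ℝ) = (numSharing b : ℝ) := by rw [numSharing, hUdef]
      have hOccb := occ_bound b
      have hOmem : O ∈ 𝒮 := by
        rw [h𝒮def]
        refine Finset.mem_filter.2 ⟨Finset.mem_powerset.2 (Finset.subset_univ _), ?_⟩
        rw [Finset.card_compl, Fintype.card_fin]
        have hOle : O.card ≤ N := by
          calc O.card ≤ (Finset.univ : Finset (Fin N)).card := Finset.card_le_univ _
          _ = N := by rw [Finset.card_univ, Fintype.card_fin]
        rw [Nat.cast_sub hOle]
        linarith
      have hUmem : U ∈ 𝒰 := by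
        rw [h𝒰def]
        refine Finset.mem_filter.2 ⟨Finset.mem_powerset.2 (Finset.subset_univ _), ?_⟩
        rw [hUcard]
        exact hshare'
      refine Set.mem_biUnion hOmem (Set.mem_biUnion hUmem ?_)
      refine Set.mem_iInter.2 fun n => Set.mem_iInter.2 fun hnU => ?_
      have hshn : ∃ m', m' ≠ n ∧ b m' = b n := by
        rw [hUdef] at hnU
        exact (Finset.mem_filter.1 hnU).2
      have hdet := det_lemma (fun m' n' k => h N m' n' k ω) (P N) N0 hN0 (hP N) (M N) hM1 hN1
        (fun a b' c' => hA a b' c') b hPNE n hshn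
      -- T_n ⊆ O
      have hTO : ∀ k : Fin N, orderStat (fun k => ‖h N n n k ω‖) (N - M N + 1)
          ≤ ‖h N n n k ω‖ → k ∈ O := by
        intro k hk
        obtain ⟨m', hm', hbm'⟩ := hdet k hk
        rw [hOdef]
        exact Finset.mem_image.2 ⟨m', Finset.mem_univ m', hbm'⟩
      simp only [Set.mem_preimage, hSndef, Set.mem_union, Set.mem_setOf_eq]
      by_cases hσt : orderStat (fun k => ‖h N n n k ω‖) (N - M N + 1) ≤ t n
      · left
        intro b' hb'
        have hb'O : b' ∉ O := by
          have : b' ∈ Oᶜ := Finset.mem_of_mem_filter b' hb'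
          simpa [Finset.mem_compl] using this
        by_contra hcon
        push_neg at hcon
        have : orderStat (fun k => ‖h N n n k ω‖) (N - M N + 1)
            ≤ ‖h N n n b' ω‖ := le_trans hσt hcon.le
        exact hb'O (hTO b' this)
      · right
        push_neg at hσt
        have hcount := orderStat_count (fun k => ‖h N n n k ω‖) (N - M N + 1)
          (by omega) (by omega)
        have hsubT : (Finset.univ.filter fun k => orderStat (fun k => ‖h N n n k ω‖) (N - M N + 1) ≤ ‖h N n n k ω‖)
            ⊆ Finset.univ.filter fun k => t n < ‖h N n n k ω‖ := by
          intro k hk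
          rw [Finset.mem_filter] at hk ⊢
          exact ⟨hk.1, lt_of_lt_of_le hσt hk.2⟩
        calc Ms ≤ N + 1 - (N - M N + 1) := by omega
        _ ≤ _ := le_trans hcount (Finset.card_le_card hsubT)
    -- put it together
    calc μ N {ω | ∃ b : Fin N → Fin N,
        IsPNE (fun c n => mfsigUtil (fun m' n' k => h N m' n' k ω) (P N) N0 (M N) c n) b ∧
        r * N ≤ (numSharing b : ℝ)}
        ≤ μ N (Aᶜ ∪ ⋃ O ∈ 𝒮, ⋃ U ∈ 𝒰, ⋂ n ∈ U, (fun ω (k : Fin N) => h N n n k ω) ⁻¹' Sn O n) :=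
          measure_mono hincl
    _ ≤ μ N Aᶜ + μ N (⋃ O ∈ 𝒮, ⋃ U ∈ 𝒰, ⋂ n ∈ U, (fun ω (k : Fin N) => h N n n k ω) ⁻¹' Sn O n) :=
          measure_union_le _ _
    _ = μ N (⋃ O ∈ 𝒮, ⋃ U ∈ 𝒰, ⋂ n ∈ U, (fun ω (k : Fin N) => h N n n k ω) ⁻¹' Sn O n) := by
          rw [hAnull, zero_add]
    _ ≤ ∑ O ∈ 𝒮, μ N (⋃ U ∈ 𝒰, ⋂ n ∈ U, (fun ω (k : Fin N) => h N n n k ω) ⁻¹' Sn O n) :=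
          measure_biUnion_finset_le _ _
    _ ≤ ∑ O ∈ 𝒮, ∑ U ∈ 𝒰, μ N (⋂ n ∈ U, (fun ω (k : Fin N) => h N n n k ω) ⁻¹' Sn O n) :=
          Finset.sum_le_sum fun O _ => measure_biUnion_finset_le _ _
    _ ≤ ∑ O ∈ 𝒮, ∑ U ∈ 𝒰, ENNReal.ofReal p ^ (⌈r' * N⌉₊) := by
          refine Finset.sum_le_sum fun O hO => Finset.sum_le_sum fun U hU => ?_
          have hOgood : r' * N / 2 ≤ (Oᶜ.card:ℝ) := by
            rw [h𝒮def] at hO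
            exact (Finset.mem_filter.1 hO).2
          have hUgood : r' * N ≤ (U.card:ℝ) := by
            rw [h𝒰def] at hU
            exact (Finset.mem_filter.1 hU).2
          rw [users_indep (μ N) (h N) (hch N).indepPairs U (Sn O) (hSnMeas O)]
          calc ∏ n ∈ U, μ N ((fun ω (k : Fin N) => h N n n k ω) ⁻¹' Sn O n)
              ≤ ∏ n ∈ U, ENNReal.ofReal p := Finset.prod_le_prod' fun n _ => huser O hOgood n
          _ = ENNReal.ofReal p ^ U.card := Finset.prod_const _
          _ ≤ ENNReal.ofReal p ^ (⌈r' * N⌉₊) := by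
                exact pow_le_pow_of_le_one zero_le
                  (ENNReal.ofReal_le_one.2 hp1.le) (Nat.ceil_le.2 hUgood)
    _ ≤ ENNReal.ofReal (q ^ N) := by
          rw [Finset.sum_const, Finset.sum_const, nsmul_eq_mul, nsmul_eq_mul]
          have h𝒮card : (𝒮.card : ENNReal) ≤ 2^N := by
            have : 𝒮.card ≤ 2^N := by
              rw [h𝒮def]
              calc (Finset.univ.powerset.filter _).card ≤ (Finset.univ : Finset (Fin N)).powerset.card :=
                    Finset.card_filter_le _ _
              _ = 2^N := by rw [Finset.card_powerset, Finset.card_univ, Fintype.card_fin]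
            exact_mod_cast this
          have h𝒰card : (𝒰.card : ENNReal) ≤ 2^N := by
            have : 𝒰.card ≤ 2^N := by
              rw [h𝒰def]
              calc (Finset.univ.powerset.filter _).card ≤ (Finset.univ : Finset (Fin N)).powerset.card :=
                    Finset.card_filter_le _ _
              _ = 2^N := by rw [Finset.card_powerset, Finset.card_univ, Fintype.card_fin]
            exact_mod_cast this
          calc (𝒮.card : ENNReal) * ((𝒰.card : ENNReal) * ENNReal.ofReal p ^ (⌈r' * N⌉₊))
              ≤ 2^N * (2^N * ENNReal.ofReal p ^ (⌈r' * N⌉₊)) := by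
                apply mul_le_mul' h𝒮card
                apply mul_le_mul' h𝒰card (le_refl _)
          _ = ENNReal.ofReal ((2:ℝ)^N * ((2:ℝ)^N * p ^ (⌈r' * N⌉₊))) := by
                rw [ENNReal.ofReal_mul (by positivity), ENNReal.ofReal_mul (by positivity),
                  ENNReal.ofReal_pow (by norm_num : (0:ℝ) ≤ 2), ENNReal.ofReal_pow hp0.le]
                norm_num
          _ ≤ ENNReal.ofReal (q ^ N) := by
                apply ENNReal.ofReal_le_ofReal
                have hpr : p ^ (⌈r' * N⌉₊) ≤ Real.exp (-3) ^ N := by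
                  have e1 : p ^ (⌈r' * N⌉₊) = p ^ ((⌈r' * N⌉₊ : ℝ)) :=
                    (Real.rpow_natCast p _).symm
                  have e2 : p ^ ((⌈r' * N⌉₊ : ℝ)) ≤ p ^ (r' * N) :=
                    Real.rpow_le_rpow_of_exponent_ge hp0 hp1.le (Nat.le_ceil _)
                  have e3 : p ^ (r' * (N:ℝ)) = (p ^ r') ^ (N : ℕ) := by
                    rw [← Real.rpow_natCast (p ^ r') N, ← Real.rpow_mul hp0.le]
                  have e4 : p ^ r' = Real.exp (-3) := by
                    rw [hpdef, ← Real.exp_mul]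
                    congr 1
                    field_simp
                  rw [e1]
                  refine le_trans e2 ?_
                  rw [e3, e4]
                calc (2:ℝ)^N * ((2:ℝ)^N * p ^ (⌈r' * N⌉₊))
                    ≤ (2:ℝ)^N * ((2:ℝ)^N * Real.exp (-3) ^ N) := by
                      apply mul_le_mul_of_nonneg_left _ (by positivity)
                      apply mul_le_mul_of_nonneg_left hpr (by positivity)
                _ = q ^ N := by
                      rw [hqdef, show (4:ℝ) = 2*2 by norm_num, mul_pow, mul_pow]
                      ring
  -- conclude by squeezing
  have h0 : Tendsto (fun N : ℕ => ENNReal.ofReal (q ^ N)) atTop (nhds 0) := by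
    have := ENNReal.tendsto_ofReal (tendsto_pow_atTop_nhds_zero_of_lt_one hq0 hq1)
    simpa using this
  exact tendsto_of_tendsto_of_tendsto_of_le_of_le' tendsto_const_nhds h0
    (Eventually.of_forall fun N => zero_le) key
end

section
/- Let X be a positive random variable with CDF F_X and probability density function f_X. If there exist α, γ, λ > 0 and β ∈ ℝ such that lim_{x→∞} f_X(x)/(α γ λ x^{β+γ−1} e^{−λ x^γ}) = 1, then lim_{x→∞} (1 − F_X(x))/(α x^β e^{−λ x^γ}) = 1; that is, X has an exponentially-dominated tail distribution with parameters (α, β, λ, γ). -/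
open MeasureTheory ProbabilityTheory Filter

section Stmt12Helpers
open Set

private lemma tendsto_pexp {lam γ : ℝ} (hlam : 0 < lam) (hγ : 0 < γ) (s : ℝ) :
    Tendsto (fun x : ℝ => x ^ s * Real.exp (-lam * x ^ γ)) atTop (nhds 0) := by
  have h1 := tendsto_rpow_mul_exp_neg_mul_atTop_nhds_zero (s / γ) lam hlam
  refine (h1.comp (tendsto_rpow_atTop hγ)).congr' ?_
  filter_upwards [eventually_gt_atTop (0:ℝ)] with x hx
  simp only [Function.comp]
  rw [← Real.rpow_mul hx.le]
  rw [show γ * (s / γ) = s by field_simp]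

private lemma ev_le_rpow_neg_two {lam γ : ℝ} (hlam : 0 < lam) (hγ : 0 < γ) (s : ℝ) :
    ∀ᶠ t : ℝ in atTop, t ^ s * Real.exp (-lam * t ^ γ) ≤ t ^ (-2 : ℝ) := by
  have h0 := tendsto_pexp hlam hγ (s + 2)
  filter_upwards [h0.eventually (eventually_le_nhds one_pos), eventually_gt_atTop (0:ℝ)]
    with t h1 ht
  have e : t ^ s * Real.exp (-lam * t ^ γ)
      = t ^ (-2:ℝ) * (t ^ (s+2) * Real.exp (-lam * t ^ γ)) := by
    rw [← mul_assoc, ← Real.rpow_add ht]; norm_num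
  rw [e]
  calc t ^ (-2:ℝ) * (t ^ (s+2) * Real.exp (-lam * t ^ γ)) ≤ t ^ (-2:ℝ) * 1 := by
        exact mul_le_mul_of_nonneg_left h1 (Real.rpow_nonneg ht.le _)
    _ = t ^ (-2:ℝ) := mul_one _

private lemma intOn_pexp {lam γ : ℝ} (hlam : 0 < lam) (hγ : 0 < γ) (s : ℝ) :
    ∃ x₁ : ℝ, 0 < x₁ ∧
      IntegrableOn (fun t : ℝ => t ^ s * Real.exp (-lam * t ^ γ)) (Ioi x₁) := by
  obtain ⟨x₀, hx₀⟩ := eventually_atTop.mp (ev_le_rpow_neg_two hlam hγ s)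
  refine ⟨max x₀ 1, lt_of_lt_of_le one_pos (le_max_right _ _), ?_⟩
  have hx₁pos : (0:ℝ) < max x₀ 1 := lt_of_lt_of_le one_pos (le_max_right _ _)
  have hcont : ContinuousOn (fun t : ℝ => t ^ s * Real.exp (-lam * t ^ γ)) (Ioi (max x₀ 1)) := by
    intro t ht
    have ht0 : (0:ℝ) < t := lt_trans hx₁pos ht
    exact (((Real.continuousAt_rpow_const t s (Or.inl ht0.ne')).mul
      ((Real.continuous_exp.continuousAt).comp
        ((continuousAt_const.mul (Real.continuousAt_rpow_const t γ (Or.inl ht0.ne')))))).continuousWithinAt)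
  refine Integrable.mono' (integrableOn_Ioi_rpow_of_lt (show (-2:ℝ) < -1 by norm_num) hx₁pos)
    (hcont.aestronglyMeasurable measurableSet_Ioi) ?_
  refine (ae_restrict_iff' measurableSet_Ioi).mpr (ae_of_all _ fun t ht => ?_)
  have ht0 : (0:ℝ) < t := lt_trans hx₁pos ht
  have hnn : 0 ≤ t ^ s * Real.exp (-lam * t ^ γ) :=
    mul_nonneg (Real.rpow_nonneg ht0.le _) (Real.exp_pos _).le
  rw [Real.norm_eq_abs, abs_of_nonneg hnn]
  exact hx₀ t (le_trans (le_max_left _ _) ht.le)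

private lemma hasDerivAt_negG {α β lam γ : ℝ} (hγ : 0 < γ) {t : ℝ} (ht : 0 < t) :
    HasDerivAt (fun y : ℝ => -(α * y ^ β * Real.exp (-lam * y ^ γ)))
      (α * γ * lam * t ^ (β + γ - 1) * Real.exp (-lam * t ^ γ)
        - α * β * t ^ (β - 1) * Real.exp (-lam * t ^ γ)) t := by
  have h1 : HasDerivAt (fun y : ℝ => y ^ β) (β * t ^ (β - 1)) t :=
    Real.hasDerivAt_rpow_const (Or.inl ht.ne')
  have h2 : HasDerivAt (fun y : ℝ => -lam * y ^ γ) (-lam * (γ * t ^ (γ - 1))) t :=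
    (Real.hasDerivAt_rpow_const (Or.inl ht.ne')).const_mul _
  have h4 := ((h1.mul h2.exp).const_mul α).neg
  have e0 : (fun y : ℝ => -(α * y ^ β * Real.exp (-lam * y ^ γ)))
      = fun y : ℝ => -(α * (y ^ β * Real.exp (-lam * y ^ γ))) := by
    funext y; ring
  rw [e0]
  refine h4.congr_deriv ?_
  have e1 : t ^ (β + γ - 1) = t ^ β * t ^ (γ - 1) := by
    rw [← Real.rpow_add ht]; ring_nf
  rw [e1]; ring

private lemma tail_asymp {α lam γ : ℝ} (β : ℝ) (hα : 0 < α) (hlam : 0 < lam) (hγ : 0 < γ) :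
    ∃ x₁ : ℝ, 0 < x₁ ∧
      IntegrableOn (fun t : ℝ => α * γ * lam * t ^ (β + γ - 1) * Real.exp (-lam * t ^ γ)) (Ioi x₁) ∧
      (∀ x, x₁ ≤ x → 0 < ∫ t in Ioi x, α * γ * lam * t ^ (β + γ - 1) * Real.exp (-lam * t ^ γ)) ∧
      Tendsto (fun x : ℝ => (∫ t in Ioi x, α * γ * lam * t ^ (β + γ - 1) * Real.exp (-lam * t ^ γ)) /
        (α * x ^ β * Real.exp (-lam * x ^ γ))) atTop (nhds 1) := by
  obtain ⟨a₁, ha₁, hInt₁⟩ := intOn_pexp hlam hγ (β + γ - 1)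
  obtain ⟨a₂, ha₂, hInt₂⟩ := intOn_pexp hlam hγ (β - 1)
  set H : ℝ → ℝ := fun t => α * γ * lam * t ^ (β + γ - 1) * Real.exp (-lam * t ^ γ) with hHdef
  set Q : ℝ → ℝ := fun t => α * β * t ^ (β - 1) * Real.exp (-lam * t ^ γ) with hQdef
  set G : ℝ → ℝ := fun x => α * x ^ β * Real.exp (-lam * x ^ γ) with hGdef
  set c : ℝ := |β| / (γ * lam) with hcdef
  have hc0 : 0 ≤ c := div_nonneg (abs_nonneg _) (mul_pos hγ hlam).le
  set x₁ : ℝ := max a₁ a₂ with hx₁def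
  have hx₁pos : 0 < x₁ := lt_of_lt_of_le ha₁ (le_max_left _ _)
  have hH : IntegrableOn H (Ioi x₁) := by
    have h0 : IntegrableOn (fun t : ℝ => α * γ * lam * (t ^ (β + γ - 1) * Real.exp (-lam * t ^ γ)))
        (Ioi x₁) := (hInt₁.mono_set (Ioi_subset_Ioi (le_max_left _ _))).const_mul (α * γ * lam)
    exact h0.congr_fun (fun t _ => by simp only [hHdef]; ring) measurableSet_Ioi
  have hQ : IntegrableOn Q (Ioi x₁) := by
    have h0 : IntegrableOn (fun t : ℝ => α * β * (t ^ (β - 1) * Real.exp (-lam * t ^ γ)))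
        (Ioi x₁) := (hInt₂.mono_set (Ioi_subset_Ioi (le_max_right _ _))).const_mul (α * β)
    exact h0.congr_fun (fun t _ => by simp only [hQdef]; ring) measurableSet_Ioi
  -- basic positivity facts
  have hHnn : ∀ t : ℝ, 0 < t → 0 ≤ H t := fun t ht =>
    mul_nonneg (mul_nonneg (by positivity) (Real.rpow_nonneg ht.le _)) (Real.exp_pos _).le
  have hGpos : ∀ x : ℝ, 0 < x → 0 < G x := fun x hx =>
    mul_pos (mul_pos hα (Real.rpow_pos_of_pos hx _)) (Real.exp_pos _)
  -- the key identity and bound for x ≥ x₁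
  have hkey : ∀ x, x₁ ≤ x →
      (∫ t in Ioi x, H t) - (∫ t in Ioi x, Q t) = G x ∧
      |∫ t in Ioi x, Q t| ≤ (c * x ^ (-γ)) * ∫ t in Ioi x, H t ∧
      0 < ∫ t in Ioi x, H t := by
    intro x hx
    have hx0 : 0 < x := lt_of_lt_of_le hx₁pos hx
    have hHx : IntegrableOn H (Ioi x) := hH.mono_set (Ioi_subset_Ioi hx)
    have hQx : IntegrableOn Q (Ioi x) := hQ.mono_set (Ioi_subset_Ioi hx)
    have htend0 : Tendsto (fun y : ℝ => -(α * y ^ β * Real.exp (-lam * y ^ γ))) atTop (nhds 0) := by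
      have h := ((tendsto_pexp hlam hγ β).const_mul α).neg
      rw [mul_zero, neg_zero] at h
      refine h.congr fun y => by ring
    have hFTC : ∫ t in Ioi x, (H t - Q t) = 0 - (-(G x)) := by
      refine integral_Ioi_of_hasDerivAt_of_tendsto'
        (fun t ht => hasDerivAt_negG hγ (lt_of_lt_of_le hx0 ht)) (hHx.sub hQx) htend0
    rw [integral_sub hHx hQx, zero_sub, neg_neg] at hFTC
    have hbound : ∀ t ∈ Ioi x, |Q t| ≤ (c * x ^ (-γ)) * H t := by
      intro t ht
      have ht0 : 0 < t := lt_trans hx0 ht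
      have e2 : |Q t| = c * H t * t ^ (-γ) := by
        simp only [hQdef, hHdef, hcdef]
        rw [abs_mul, abs_mul, abs_mul, abs_of_pos hα, abs_of_pos (Real.exp_pos _),
          abs_of_pos (Real.rpow_pos_of_pos ht0 _),
          show β - 1 = (β + γ - 1) + (-γ) by ring, Real.rpow_add ht0]
        field_simp
      have htx : t ^ (-γ) ≤ x ^ (-γ) :=
        Real.rpow_le_rpow_of_nonpos hx0 ht.le (neg_nonpos.mpr hγ.le)
      calc |Q t| = c * H t * t ^ (-γ) := e2
        _ ≤ c * H t * x ^ (-γ) :=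
            mul_le_mul_of_nonneg_left htx (mul_nonneg hc0 (hHnn t ht0))
        _ = (c * x ^ (-γ)) * H t := by ring
    have habs : |∫ t in Ioi x, Q t| ≤ (c * x ^ (-γ)) * ∫ t in Ioi x, H t := by
      calc |∫ t in Ioi x, Q t| ≤ ∫ t in Ioi x, |Q t| := by
            simpa [Real.norm_eq_abs] using norm_integral_le_integral_norm (μ := volume.restrict (Ioi x)) Q
        _ ≤ ∫ t in Ioi x, (c * x ^ (-γ)) * H t :=
            setIntegral_mono_on hQx.abs (hHx.const_mul _) measurableSet_Ioi hbound
        _ = (c * x ^ (-γ)) * ∫ t in Ioi x, H t := integral_const_mul _ _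
    have hInn : 0 ≤ ∫ t in Ioi x, H t :=
      setIntegral_nonneg measurableSet_Ioi (fun t ht => hHnn t (lt_trans hx0 ht))
    refine ⟨hFTC, habs, ?_⟩
    rcases eq_or_lt_of_le hInn with heq | h
    · exfalso
      have h0 : |∫ t in Ioi x, Q t| ≤ 0 := by rw [← heq] at habs; simpa using habs
      have hq : (∫ t in Ioi x, Q t) = 0 := abs_eq_zero.mp (le_antisymm h0 (abs_nonneg _))
      rw [← heq, hq] at hFTC
      simp at hFTC
      exact absurd hFTC.symm (ne_of_gt (hGpos x hx0))
    · exact h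
  refine ⟨x₁, hx₁pos, hH, fun x hx => (hkey x hx).2.2, ?_⟩
  -- squeeze
  have hsmall : ∀ᶠ x : ℝ in atTop, c * x ^ (-γ) ≤ 1 / 2 := by
    have h := (tendsto_rpow_neg_atTop hγ).const_mul c
    rw [mul_zero] at h
    exact h.eventually (eventually_le_nhds one_half_pos)
  have hclaim : ∀ᶠ x : ℝ in atTop,
      ‖(∫ t in Ioi x, H t) / G x - 1‖ ≤ (2 * c) * x ^ (-γ) := by
    filter_upwards [eventually_ge_atTop x₁, hsmall] with x hx hsm
    obtain ⟨hsum, habs, hIpos⟩ := hkey x hx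
    have hx0 : 0 < x := lt_of_lt_of_le hx₁pos hx
    have hGx := hGpos x hx0
    set Ix := ∫ t in Ioi x, H t
    set Qx := ∫ t in Ioi x, Q t
    have hI2 : Ix ≤ 2 * G x := by
      have h1 := le_abs_self Qx
      have h2 : (c * x ^ (-γ)) * Ix ≤ (1 / 2) * Ix :=
        mul_le_mul_of_nonneg_right hsm hIpos.le
      linarith
    have e3 : Ix / G x - 1 = Qx / G x := by
      rw [div_sub_one hGx.ne']
      congr 1
      linarith
    rw [Real.norm_eq_abs, e3, abs_div, abs_of_pos hGx]
    have hc'0 : 0 ≤ c * x ^ (-γ) := mul_nonneg hc0 (Real.rpow_nonneg hx0.le _)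
    have h4 : |Qx| / G x ≤ ((c * x ^ (-γ)) * Ix) / G x :=
      (div_le_div_iff_of_pos_right hGx).mpr habs
    have h5 : ((c * x ^ (-γ)) * Ix) / G x ≤ (2 * c) * x ^ (-γ) := by
      rw [div_le_iff₀ hGx]
      nlinarith [mul_le_mul_of_nonneg_left hI2 hc'0]
    linarith
  have hRHS : Tendsto (fun x : ℝ => (2 * c) * x ^ (-γ)) atTop (nhds 0) := by
    have h := (tendsto_rpow_neg_atTop hγ).const_mul (2 * c)
    rwa [mul_zero] at h
  have := squeeze_zero_norm' hclaim hRHS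
  exact tendsto_sub_nhds_zero_iff.mp this

end Stmt12Helpers

section Stmt12Proof
open Set

/-- if the pdf of a positive random variable `X` satisfies
`f(x)/(αγλ x^{β+γ-1} e^{-λx^γ}) → 1`, then `X` has an exponentially-dominated tail
with parameters `(α, β, λ, γ)`. -/
theorem stmt_12 {Ω : Type*} [MeasurableSpace Ω] (μ : Measure Ω) [IsProbabilityMeasure μ]
    (X : Ω → ℝ) (hXmeas : Measurable X) (hXpos : ∀ ω, 0 < X ω)
    (f : ℝ → ℝ)
    (hpdf : ∀ x, cdfOf μ X x = ∫ t in Set.Iic x, f t)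
    (α β lam γ : ℝ) (hα : 0 < α) (hlam : 0 < lam) (hγ : 0 < γ)
    (hf : Tendsto (fun x : ℝ => f x /
        (α * γ * lam * x ^ (β + γ - 1) * Real.exp (-lam * x ^ γ))) atTop (nhds 1)) :
    ExpDomTail (cdfOf μ X) α β lam γ := by
  classical
  set F : ℝ → ℝ := cdfOf μ X with hFdef
  -- F tends to 1 at +∞
  have hmap : IsProbabilityMeasure (μ.map X) := Measure.isProbabilityMeasure_map hXmeas.aemeasurable
  have hFeq : ∀ x, F x = ProbabilityTheory.cdf (μ.map X) x := by
    intro x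
    rw [ProbabilityTheory.cdf_eq_real, map_measureReal_apply hXmeas measurableSet_Iic]
    rfl
  have hF1 : Tendsto F atTop (nhds 1) := by
    refine (tendsto_congr hFeq).mpr (tendsto_cdf_atTop _)
  obtain ⟨x₁, hx₁pos, hHInt, hIpos, hIG⟩ := tail_asymp β hα hlam hγ
  set H : ℝ → ℝ := fun t => α * γ * lam * t ^ (β + γ - 1) * Real.exp (-lam * t ^ γ) with hHdef
  set I : ℝ → ℝ := fun x => ∫ t in Ioi x, H t with hIdef
  -- F is eventually > 1/2, giving integrability of f on lower rays
  obtain ⟨x₀, hx₀⟩ := eventually_atTop.mp (hF1.eventually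
    (lt_mem_nhds (show (1:ℝ)/2 < 1 by norm_num)))
  have hfint : ∀ y, x₀ ≤ y → IntegrableOn f (Iic y) := by
    intro y hy
    by_contra hni
    have h1 := hpdf y
    rw [integral_undef hni] at h1
    have h2 := hx₀ y hy
    rw [h1] at h2
    norm_num at h2
  -- key estimate
  have hstar : ∀ ε : ℝ, 0 < ε → ∀ᶠ x : ℝ in atTop, |(1 - F x) - I x| ≤ ε * I x := by
    intro ε hε
    have hev : ∀ᶠ t : ℝ in atTop, |f t / H t - 1| < ε := by
      have h := Metric.tendsto_nhds.mp hf ε hε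
      simpa only [Real.dist_eq, hHdef] using h
    obtain ⟨M, hM⟩ := eventually_atTop.mp hev
    filter_upwards [eventually_ge_atTop (max (max x₀ M) x₁), eventually_gt_atTop (0:ℝ)]
      with x hx hx0
    have hxx₀ : x₀ ≤ x := le_trans (le_trans (le_max_left _ _) (le_max_left _ _)) hx
    have hxM : M ≤ x := le_trans (le_trans (le_max_right _ _) (le_max_left _ _)) hx
    have hxx₁ : x₁ ≤ x := le_trans (le_max_right _ _) hx
    have hfb : ∀ t, x < t → (1 - ε) * H t ≤ f t ∧ f t ≤ (1 + ε) * H t := by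
      intro t ht
      have ht0 : 0 < t := lt_trans hx0 ht
      have hHt : 0 < H t := by
        simp only [hHdef]
        exact mul_pos (mul_pos (mul_pos (mul_pos hα hγ) hlam)
          (Real.rpow_pos_of_pos ht0 _)) (Real.exp_pos _)
      have h1 := hM t (le_trans hxM ht.le)
      rw [abs_lt] at h1
      constructor
      · have := h1.1
        have h2 : 1 - ε < f t / H t := by linarith
        have := (lt_div_iff₀ hHt).mp h2
        linarith
      · have := h1.2
        have h2 : f t / H t < 1 + ε := by linarith
        have := (div_lt_iff₀ hHt).mp h2
        linarith
    have hHIoi : IntegrableOn H (Ioi x) := hHInt.mono_set (Ioi_subset_Ioi hxx₁)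
    have hIx : 0 < I x := hIpos x hxx₁
    have hIocH : Tendsto (fun y => ∫ t in Ioc x y, H t) atTop (nhds (I x)) := by
      have h := intervalIntegral_tendsto_integral_Ioi x hHIoi tendsto_id
      refine h.congr' ?_
      filter_upwards [eventually_ge_atTop x] with y hy
      simp only [id_eq]
      exact intervalIntegral.integral_of_le hy
    have hFdiff : ∀ y, x ≤ y → F y - F x = ∫ t in Ioc x y, f t := by
      intro y hy
      have hIy : IntegrableOn f (Iic y) := hfint y (le_trans hxx₀ hy)
      have hIocf : IntegrableOn f (Ioc x y) := hIy.mono_set Ioc_subset_Iic_self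
      have hIicx : IntegrableOn f (Iic x) := hIy.mono_set (Iic_subset_Iic.mpr hy)
      have e1 : F y = (∫ t in Iic x, f t) + ∫ t in Ioc x y, f t := by
        rw [hpdf y, ← Set.Iic_union_Ioc_eq_Iic hy,
          setIntegral_union (Set.Iic_disjoint_Ioc le_rfl) measurableSet_Ioc hIicx hIocf]
      have e2 : F x = ∫ t in Iic x, f t := hpdf x
      rw [e1, e2]
      exact add_sub_cancel_left _ _
    have hFy : Tendsto (fun y => ∫ t in Ioc x y, f t) atTop (nhds (1 - F x)) := by
      refine (hF1.sub_const (F x)).congr' ?_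
      filter_upwards [eventually_ge_atTop x] with y hy using hFdiff y hy
    have hup : ∀ y, x ≤ y → (∫ t in Ioc x y, f t) ≤ (1 + ε) * ∫ t in Ioc x y, H t := by
      intro y hy
      have hIocf : IntegrableOn f (Ioc x y) :=
        (hfint y (le_trans hxx₀ hy)).mono_set Ioc_subset_Iic_self
      have hIocH' : IntegrableOn H (Ioc x y) := hHIoi.mono_set Ioc_subset_Ioi_self
      calc (∫ t in Ioc x y, f t) ≤ ∫ t in Ioc x y, (1 + ε) * H t :=
            setIntegral_mono_on hIocf (hIocH'.const_mul _) measurableSet_Ioc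
              (fun t ht => (hfb t ht.1).2)
        _ = (1 + ε) * ∫ t in Ioc x y, H t := integral_const_mul _ _
    have hlo : ∀ y, x ≤ y → (1 - ε) * (∫ t in Ioc x y, H t) ≤ ∫ t in Ioc x y, f t := by
      intro y hy
      have hIocf : IntegrableOn f (Ioc x y) :=
        (hfint y (le_trans hxx₀ hy)).mono_set Ioc_subset_Iic_self
      have hIocH' : IntegrableOn H (Ioc x y) := hHIoi.mono_set Ioc_subset_Ioi_self
      calc (1 - ε) * ∫ t in Ioc x y, H t = ∫ t in Ioc x y, (1 - ε) * H t :=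
            (integral_const_mul _ _).symm
        _ ≤ ∫ t in Ioc x y, f t :=
            setIntegral_mono_on (hIocH'.const_mul _) hIocf measurableSet_Ioc
              (fun t ht => (hfb t ht.1).1)
    have hup' : 1 - F x ≤ (1 + ε) * I x := by
      refine le_of_tendsto_of_tendsto hFy (hIocH.const_mul (1 + ε)) ?_
      filter_upwards [eventually_ge_atTop x] with y hy using hup y hy
    have hlo' : (1 - ε) * I x ≤ 1 - F x := by
      refine le_of_tendsto_of_tendsto (hIocH.const_mul (1 - ε)) hFy ?_
      filter_upwards [eventually_ge_atTop x] with y hy using hlo y hy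
    rw [abs_le]
    constructor <;> nlinarith
  -- (1 - F)/I → 1
  have hA : Tendsto (fun x => (1 - F x) / I x) atTop (nhds 1) := by
    rw [Metric.tendsto_nhds]
    intro ε hε
    filter_upwards [hstar (ε/2) (half_pos hε), eventually_ge_atTop x₁] with x h1 h2
    have hIx : 0 < I x := hIpos x h2
    rw [Real.dist_eq]
    have e : (1 - F x) / I x - 1 = ((1 - F x) - I x) / I x := by
      field_simp
    rw [e, abs_div, abs_of_pos hIx]
    calc |1 - F x - I x| / I x ≤ (ε/2 * I x) / I x := by
          exact div_le_div_of_nonneg_right h1 hIx.le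
      _ = ε/2 := by field_simp
      _ < ε := by linarith
  have hfinal := hA.mul hIG
  rw [mul_one] at hfinal
  unfold ExpDomTail
  refine hfinal.congr' ?_
  filter_upwards [eventually_ge_atTop x₁] with x hx
  have hIx : I x ≠ 0 := (hIpos x hx).ne'
  rw [div_mul_div_comm, mul_comm (I x) (α * x ^ β * Real.exp (-lam * x ^ γ)),
    mul_div_mul_right _ _ hIx]

end Stmt12Proof
end

section
/- Let X be a random variable with an exponentially-dominated tail distribution with parameters (α, β, λ, γ). Then lim_{p→0⁺} q̄_X(p) / [(1/λ)·ln(α/p)]^{1/γ} = 1, where q̄_X is the tail quantile function of X. -/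
open MeasureTheory ProbabilityTheory Filter

/-- Tail quantile function `q̄_F(p) = min {x | F x ≥ 1 - p}` (as an infimum). -/
noncomputable def tailQuantile (F : ℝ → ℝ) (p : ℝ) : ℝ := sInf {x | 1 - p ≤ F x}

section AuxLemmas
open Filter Real

-- dominating function tends to 0
lemma auxA {α β lam γ : ℝ} (hα : 0 < α) (hlam : 0 < lam) (hγ : 0 < γ) :
    Tendsto (fun x : ℝ => α * x ^ β * Real.exp (-lam * x ^ γ)) atTop (nhds 0) := by
  have h1 := tendsto_rpow_mul_exp_neg_mul_atTop_nhds_zero (β / γ) lam hlam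
  have h2 := ((h1.comp (tendsto_rpow_atTop hγ)).const_mul α)
  rw [mul_zero] at h2
  refine h2.congr' ?_
  filter_upwards [eventually_gt_atTop (0:ℝ)] with x hx
  have : (x ^ γ) ^ (β / γ) = x ^ β := by
    rw [← Real.rpow_mul hx.le]
    congr 1
    field_simp
  simp only [Function.comp]
  rw [this]
  ring

-- main asymptotic lemma
lemma auxMain (G : ℝ → ℝ) {α β lam γ : ℝ} (hα : 0 < α) (hlam : 0 < lam) (hγ : 0 < γ)
    (h : Tendsto (fun x : ℝ => G x / (α * x ^ β * Real.exp (-lam * x ^ γ))) atTop (nhds 1)) :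
    Tendsto (fun x : ℝ => x / ((1 / lam) * Real.log (α / G x)) ^ (1 / γ)) atTop (nhds 1) := by
  set R := fun x : ℝ => G x / (α * x ^ β * Real.exp (-lam * x ^ γ)) with hRdef
  set u := fun x : ℝ => (Real.log (R x) + β * Real.log x) / (lam * x ^ γ) with hudef
  -- u → 0
  have hlog : Tendsto (fun x => Real.log (R x)) atTop (nhds 0) := by
    have := (Real.continuousAt_log one_ne_zero).tendsto.comp h
    simpa [Function.comp_def] using this
  have hinv : Tendsto (fun x : ℝ => (lam * x ^ γ)⁻¹) atTop (nhds 0) := by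
    exact (Tendsto.const_mul_atTop hlam (tendsto_rpow_atTop hγ)).inv_tendsto_atTop
  have hlogdiv : Tendsto (fun x : ℝ => Real.log x / x ^ γ) atTop (nhds 0) :=
    (isLittleO_log_rpow_atTop hγ).tendsto_div_nhds_zero
  have hu : Tendsto u atTop (nhds 0) := by
    have h1 := hlog.mul hinv
    have h2 := hlogdiv.const_mul (β / lam)
    rw [mul_zero] at h1 h2
    have := h1.add h2
    rw [add_zero] at this
    refine this.congr' ?_
    filter_upwards [eventually_gt_atTop (0:ℝ)] with x hx
    have hxγ : (0:ℝ) < x ^ γ := Real.rpow_pos_of_pos hx γ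
    rw [hudef]
    field_simp
  -- eventual equality
  have heq : (fun x : ℝ => x / ((1 / lam) * Real.log (α / G x)) ^ (1 / γ)) =ᶠ[atTop]
      (fun x : ℝ => ((1 - u x) ^ (1 / γ))⁻¹) := by
    filter_upwards [eventually_gt_atTop (0:ℝ), h.eventually (eventually_gt_nhds zero_lt_one),
      hu.eventually (eventually_lt_nhds (show (0:ℝ) < 1/2 by norm_num))] with x hx hR hux
    have hxγ : (0:ℝ) < x ^ γ := Real.rpow_pos_of_pos hx γ
    have hxβ : (0:ℝ) < x ^ β := Real.rpow_pos_of_pos hx β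
    have hA : (0:ℝ) < α * x ^ β * Real.exp (-lam * x ^ γ) := by positivity
    have hG : G x = R x * (α * x ^ β * Real.exp (-lam * x ^ γ)) := by
      rw [hRdef]; field_simp
    have hGpos : 0 < G x := by rw [hG]; positivity
    have hlogG : Real.log (G x) = Real.log (R x) + (Real.log α + β * Real.log x
        + (-lam * x ^ γ)) := by
      rw [hG, Real.log_mul hR.ne' hA.ne', Real.log_mul (by positivity) (Real.exp_ne_zero _),
        Real.log_mul hα.ne' hxβ.ne', Real.log_rpow hx, Real.log_exp]
    have key : (1 / lam) * Real.log (α / G x) = x ^ γ * (1 - u x) := by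
      rw [Real.log_div hα.ne' hGpos.ne', hlogG, hudef]
      field_simp
      ring
    have hupos : (0:ℝ) < 1 - u x := by linarith
    rw [key, Real.mul_rpow hxγ.le hupos.le, ← Real.rpow_mul hx.le,
      mul_one_div_cancel hγ.ne', Real.rpow_one, div_mul_eq_div_div_swap, div_right_comm,
      div_self hx.ne', one_div]
  refine (Tendsto.congr' heq.symm ?_)
  have h1 : Tendsto (fun x => (1 - u x)) atTop (nhds 1) := by
    have := (tendsto_const_nhds (x := (1:ℝ))).sub hu
    simpa using this
  have h2 := h1.rpow_const (p := 1/γ) (Or.inl one_ne_zero)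
  rw [Real.one_rpow] at h2
  simpa using h2.inv₀ one_ne_zero

end AuxLemmas

/-- for a random variable with an exponentially-dominated tail (continuous CDF),
`q̄_X(p) / [(1/λ) ln(α/p)]^{1/γ} → 1` as `p → 0⁺`. -/
theorem stmt_14 {Ω : Type*} [MeasurableSpace Ω] (μ : Measure Ω) [IsProbabilityMeasure μ]
    (X : Ω → ℝ) (hXmeas : Measurable X)
    (F : ℝ → ℝ) (hFdef : F = cdfOf μ X) (hFcont : Continuous F)
    (α β lam γ : ℝ) (hα : 0 < α) (hlam : 0 < lam) (hγ : 0 < γ)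
    (htail : ExpDomTail F α β lam γ) :
    Tendsto (fun p : ℝ => tailQuantile F p / ((1 / lam) * Real.log (α / p)) ^ (1 / γ))
      (nhdsWithin 0 (Set.Ioi 0)) (nhds 1) := by
  set G : ℝ → ℝ := fun x => 1 - F x with hGdef
  set q : ℝ → ℝ := tailQuantile F with hqdef
  have htail' : Tendsto (fun x : ℝ => G x / (α * x ^ β * Real.exp (-lam * x ^ γ)))
      atTop (nhds 1) := htail
  -- F is monotone
  have hFmono : Monotone F := by
    subst hFdef
    intro a b hab
    exact ENNReal.toReal_mono (measure_ne_top μ _)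
      (measure_mono (fun ω hω => le_trans hω hab))
  -- F → 0 at -∞
  have hFbot : Tendsto F atBot (nhds 0) := by
    haveI : IsProbabilityMeasure (μ.map X) := Measure.isProbabilityMeasure_map hXmeas.aemeasurable
    have hF : F = ProbabilityTheory.cdf (μ.map X) := by
      funext x
      rw [hFdef, ProbabilityTheory.cdf_eq_real]
      unfold cdfOf
      rw [Measure.real, Measure.map_apply hXmeas measurableSet_Iic]
      rfl
    rw [hF]
    exact ProbabilityTheory.tendsto_cdf_atBot _
  -- G → 0 at +∞ and G eventually positive
  have hG0 : Tendsto G atTop (nhds 0) := by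
    have := htail'.mul (auxA hα hlam hγ (β := β))
    rw [mul_zero] at this
    refine this.congr' ?_
    filter_upwards [eventually_gt_atTop (0:ℝ)] with x hx
    have hA : (0:ℝ) < α * x ^ β * Real.exp (-lam * x ^ γ) := by
      have := Real.rpow_pos_of_pos hx β; positivity
    field_simp
  have hGpos : ∀ᶠ x in atTop, 0 < G x := by
    filter_upwards [htail'.eventually (eventually_gt_nhds zero_lt_one),
      eventually_gt_atTop (0:ℝ)] with x hR hx
    have hA : (0:ℝ) < α * x ^ β * Real.exp (-lam * x ^ γ) := by
      have := Real.rpow_pos_of_pos hx β; positivity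
    have : G x = (G x / (α * x ^ β * Real.exp (-lam * x ^ γ)))
        * (α * x ^ β * Real.exp (-lam * x ^ γ)) := by field_simp
    rw [this]; exact mul_pos hR hA
  -- basic facts about the quantile for p ∈ (0,1)
  have hSfacts : ∀ p : ℝ, 0 < p → p < 1 →
      {x | 1 - p ≤ F x}.Nonempty ∧ BddBelow {x | 1 - p ≤ F x} ∧ G (q p) = p := by
    intro p hp0 hp1
    have hne : {x | 1 - p ≤ F x}.Nonempty := by
      obtain ⟨x, hx⟩ := (hG0.eventually (eventually_lt_nhds hp0)).exists
      exact ⟨x, by simp only [Set.mem_setOf_eq]; have hx' : 1 - F x < p := hx; linarith⟩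
    have hbdd : BddBelow {x | 1 - p ≤ F x} := by
      obtain ⟨x1, hx1⟩ := (hFbot.eventually
        (eventually_lt_nhds (show (0:ℝ) < 1 - p by linarith))).exists
      refine ⟨x1, fun x hx => ?_⟩
      by_contra hlt
      push_neg at hlt
      exact absurd (le_trans hx (hFmono hlt.le)) (not_le.mpr hx1)
    have hclosed : IsClosed {x | 1 - p ≤ F x} := isClosed_le continuous_const hFcont
    have hmem : q p ∈ {x | 1 - p ≤ F x} := hclosed.csInf_mem hne hbdd
    have hle : F (q p) ≤ 1 - p := by
      by_contra h'
      push_neg at h'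
      have hU : IsOpen (F ⁻¹' Set.Ioi (1 - p)) := hFcont.isOpen_preimage _ isOpen_Ioi
      obtain ⟨ε, hε, hball⟩ := Metric.isOpen_iff.mp hU (q p) h'
      have hy : q p - ε / 2 ∈ F ⁻¹' Set.Ioi (1 - p) := by
        apply hball
        rw [Metric.mem_ball, Real.dist_eq]
        rw [abs_of_nonpos (by linarith)]
        linarith
      have : q p ≤ q p - ε / 2 := csInf_le hbdd (show (1:ℝ) - p ≤ F (q p - ε/2) from le_of_lt hy)
      linarith
    refine ⟨hne, hbdd, ?_⟩
    have : F (q p) = 1 - p := le_antisymm hle hmem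
    rw [hGdef]; simp only; linarith
  -- q → +∞ as p → 0+
  have hqtop : Tendsto q (nhdsWithin 0 (Set.Ioi 0)) atTop := by
    rw [tendsto_atTop]
    intro M
    obtain ⟨x0, hx0M, hx0G⟩ := ((eventually_ge_atTop M).and hGpos).exists
    have hmin : 0 < min (G x0) 1 := lt_min hx0G one_pos
    have hmem : Set.Ioo (0:ℝ) (min (G x0) 1) ∈ nhdsWithin (0:ℝ) (Set.Ioi 0) :=
      Ioo_mem_nhdsGT_of_mem ⟨le_refl 0, hmin⟩
    filter_upwards [hmem] with p hp
    have hp0 : 0 < p := hp.1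
    have hp1 : p < 1 := lt_of_lt_of_le hp.2 (min_le_right _ _)
    have hpG : p < G x0 := lt_of_lt_of_le hp.2 (min_le_left _ _)
    obtain ⟨hne, hbdd, hGq⟩ := hSfacts p hp0 hp1
    refine le_trans hx0M (le_csInf hne fun x hx => ?_)
    by_contra hlt
    push_neg at hlt
    have h1 : F x ≤ F x0 := hFmono hlt.le
    have h2 : (1:ℝ) - p ≤ F x := hx
    have h3 : G x0 = 1 - F x0 := rfl
    linarith
  -- compose and conclude
  have hcomp := (auxMain G hα hlam hγ htail').comp hqtop
  refine hcomp.congr' ?_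
  have hmem : Set.Ioo (0:ℝ) 1 ∈ nhdsWithin (0:ℝ) (Set.Ioi 0) :=
    Ioo_mem_nhdsGT_of_mem ⟨le_refl 0, one_pos⟩
  filter_upwards [hmem] with p hp
  obtain ⟨-, -, hGq⟩ := hSfacts p hp.1 hp.2
  simp only [Function.comp_apply]
  rw [hGq]
end

section
/- Let X be a random variable with an exponentially-dominated tail distribution with parameters (α, β, λ, γ), and let M_K be a sequence of reals with M_K ≥ 1 such that M_K/ln^μ K → 0 for some μ > 0 (in particular M_K/K → 0). Then lim_{K→∞} q̄_X(M_K/K) / q̄_X(1/K) = 1, where q̄_X is the tail quantile function of X. -/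
open MeasureTheory ProbabilityTheory Filter

/- ### Auxiliary lemmas -/

lemma aux_log_div_rpow (γ : ℝ) (hγ : 0 < γ) :
    Tendsto (fun x : ℝ => Real.log x / x ^ γ) atTop (nhds 0) := by
  have h0 : Tendsto (fun y : ℝ => Real.log y / y) atTop (nhds 0) :=
    Real.isLittleO_log_id_atTop.tendsto_div_nhds_zero
  have h1 := h0.comp (tendsto_rpow_atTop hγ)
  have h2 : Tendsto (fun x : ℝ => γ⁻¹ * (Real.log (x ^ γ) / x ^ γ)) atTop (nhds (γ⁻¹ * 0)) :=
    h1.const_mul _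
  rw [mul_zero] at h2
  refine h2.congr' ?_
  filter_upwards [eventually_gt_atTop (0:ℝ)] with x hx
  rw [Real.log_rpow hx]
  field_simp

lemma aux_rpow_log_div_self (t : ℝ) :
    Tendsto (fun x : ℝ => Real.log x ^ t / x) atTop (nhds 0) := by
  have h := (tendsto_rpow_mul_exp_neg_mul_atTop_nhds_zero t 1 one_pos).comp Real.tendsto_log_atTop
  refine h.congr' ?_
  filter_upwards [eventually_gt_atTop (0:ℝ)] with x hx
  simp only [Function.comp]
  rw [neg_one_mul, Real.exp_neg, Real.exp_log hx, div_eq_mul_inv]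

/-- Main analytic lemma: the tail quantile tends to infinity and satisfies
`lam * q(p)^γ / (-log p) → 1` as `p → 0⁺`. -/
lemma aux_tail_quantile (F : ℝ → ℝ) (hmono : Monotone F) (hcont : Continuous F)
    (h0F : ∀ x, 0 ≤ F x) (hbot : Tendsto F atBot (nhds 0))
    (α β lam γ : ℝ) (hα : 0 < α) (hlam : 0 < lam) (hγ : 0 < γ)
    (htail : ExpDomTail F α β lam γ) :
    Tendsto (fun p => tailQuantile F p) (nhdsWithin 0 (Set.Ioi 0)) atTop ∧
    Tendsto (fun p => lam * (tailQuantile F p) ^ γ / (-Real.log p))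
      (nhdsWithin 0 (Set.Ioi 0)) (nhds 1) := by
  have htail' : Tendsto (fun x : ℝ =>
      (1 - F x) / (α * x ^ β * Real.exp (-lam * x ^ γ))) atTop (nhds 1) := htail
  -- the dominating function tends to 0
  have hD0 : Tendsto (fun x : ℝ => α * x ^ β * Real.exp (-lam * x ^ γ)) atTop (nhds 0) := by
    have h1 := (tendsto_rpow_mul_exp_neg_mul_atTop_nhds_zero (β/γ) lam hlam).comp
      (tendsto_rpow_atTop hγ)
    have h2 : Tendsto (fun x : ℝ => α * ((x ^ γ) ^ (β/γ) * Real.exp (-lam * x ^ γ)))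
        atTop (nhds (α * 0)) := h1.const_mul _
    rw [mul_zero] at h2
    refine h2.congr' ?_
    filter_upwards [eventually_gt_atTop (0:ℝ)] with x hx
    have hβ : γ * (β / γ) = β := by field_simp
    rw [← Real.rpow_mul hx.le, hβ]
    ring
  -- tail probability tends to 0, F tends to 1
  have hG0 : Tendsto (fun x : ℝ => 1 - F x) atTop (nhds 0) := by
    have h := htail'.mul hD0
    rw [one_mul] at h
    refine h.congr' ?_
    filter_upwards [eventually_gt_atTop (0:ℝ)] with x hx
    have hD : (0:ℝ) < α * x ^ β * Real.exp (-lam * x ^ γ) := by positivity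
    exact div_mul_cancel₀ _ hD.ne'
  have hFtop : Tendsto F atTop (nhds 1) := by
    have h := (tendsto_const_nhds : Tendsto (fun _ : ℝ => (1:ℝ)) atTop (nhds 1)).sub hG0
    simpa using h
  -- F is everywhere < 1
  have hFlt1 : ∀ x, F x < 1 := by
    intro x
    have h1 : ∀ᶠ y : ℝ in atTop,
        (1/2 : ℝ) < (1 - F y) / (α * y ^ β * Real.exp (-lam * y ^ γ)) :=
      htail'.eventually (eventually_gt_nhds (by norm_num))
    obtain ⟨y, hy1, hy2⟩ := (h1.and (eventually_ge_atTop (max x 1))).exists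
    have hy0 : (0:ℝ) < y := lt_of_lt_of_le one_pos (le_trans (le_max_right x 1) hy2)
    have hD : (0:ℝ) < α * y ^ β * Real.exp (-lam * y ^ γ) := by positivity
    have hGy : 0 < 1 - F y := by
      have := (lt_div_iff₀ hD).mp hy1
      nlinarith
    have hxy := hmono (le_trans (le_max_left x 1) hy2)
    linarith
  -- basic facts about the quantile set
  have hne : ∀ p : ℝ, 0 < p → {x | 1 - p ≤ F x}.Nonempty := by
    intro p hp
    have h : ∀ᶠ x : ℝ in atTop, 1 - p < F x :=
      hFtop.eventually (eventually_gt_nhds (by linarith))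
    obtain ⟨x, hx⟩ := h.exists
    exact ⟨x, hx.le⟩
  have hbdd : ∀ p : ℝ, p < 1 → BddBelow {x | 1 - p ≤ F x} := by
    intro p hp
    have h : ∀ᶠ x : ℝ in atBot, F x < 1 - p :=
      hbot.eventually (eventually_lt_nhds (by linarith))
    obtain ⟨x0, hx0⟩ := h.exists
    refine ⟨x0, fun y hy => ?_⟩
    by_contra hcon
    push_neg at hcon
    have := hmono hcon.le
    have hy' : 1 - p ≤ F y := hy
    linarith
  have hmem : ∀ p : ℝ, 0 < p → p < 1 → 1 - p ≤ F (tailQuantile F p) := by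
    intro p hp hp1
    exact IsClosed.csInf_mem (isClosed_le continuous_const hcont) (hne p hp) (hbdd p hp1)
  have heq : ∀ p : ℝ, 0 < p → p < 1 → F (tailQuantile F p) = 1 - p := by
    intro p hp hp1
    refine le_antisymm ?_ (hmem p hp hp1)
    by_contra hcon
    push_neg at hcon
    have hev : ∀ᶠ x in nhds (tailQuantile F p), 1 - p < F x :=
      (hcont.continuousAt (x := tailQuantile F p)).eventually (eventually_gt_nhds hcon)
    rw [Metric.eventually_nhds_iff] at hev
    obtain ⟨ε, hε, hball⟩ := hev
    have hx : (tailQuantile F p - ε/2) ∈ {x | 1 - p ≤ F x} := by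
      refine le_of_lt (hball ?_)
      rw [Real.dist_eq]
      rw [abs_lt]
      constructor <;> linarith
    have := csInf_le (hbdd p hp1) hx
    have h2 : tailQuantile F p ≤ tailQuantile F p - ε/2 := this
    linarith
  -- the quantile tends to infinity
  have hqtop : Tendsto (fun p => tailQuantile F p) (nhdsWithin 0 (Set.Ioi 0)) atTop := by
    rw [tendsto_atTop]
    intro N
    have hFN : F N < 1 := hFlt1 N
    have hev : ∀ᶠ p in nhdsWithin 0 (Set.Ioi 0), p < 1 - F N :=
      Eventually.filter_mono nhdsWithin_le_nhds (eventually_lt_nhds (by linarith))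
    filter_upwards [hev, self_mem_nhdsWithin] with p hp hp0
    have hp0' : (0:ℝ) < p := hp0
    refine le_csInf (hne p hp0') fun y hy => ?_
    by_contra hcon
    push_neg at hcon
    have h1 := hmono hcon.le
    have h2 : 1 - p ≤ F y := hy
    linarith
  refine ⟨hqtop, ?_⟩
  -- the log of the ratio tends to 0
  have hh0 : Tendsto (fun x : ℝ =>
      Real.log ((1 - F x) / (α * x ^ β * Real.exp (-lam * x ^ γ)))) atTop (nhds 0) := by
    have h := ((Real.continuousAt_log one_ne_zero).tendsto).comp htail'
    simpa [Function.comp_def] using h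
  set h : ℝ → ℝ := fun x =>
    Real.log ((1 - F x) / (α * x ^ β * Real.exp (-lam * x ^ γ))) with hh_def
  -- the log identity
  have hlogG : ∀ x : ℝ, 0 < x → 0 < 1 - F x →
      Real.log (1 - F x) = h x + Real.log α + β * Real.log x - lam * x ^ γ := by
    intro x hx hG
    have hD : (0:ℝ) < α * x ^ β * Real.exp (-lam * x ^ γ) := by positivity
    have key : Real.log (1 - F x) =
        Real.log (((1 - F x) / (α * x ^ β * Real.exp (-lam * x ^ γ))) *
          (α * x ^ β * Real.exp (-lam * x ^ γ))) := by
      rw [div_mul_cancel₀ _ hD.ne']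
    rw [key, Real.log_mul (div_ne_zero hG.ne' hD.ne') hD.ne',
      Real.log_mul (by positivity) (Real.exp_ne_zero _),
      Real.log_mul hα.ne' (by positivity), Real.log_exp, Real.log_rpow hx]
    simp only [hh_def]
    ring
  -- the ratio function tends to 1 at infinity
  have hA : Tendsto (fun x : ℝ => lam * x ^ γ) atTop atTop :=
    (tendsto_rpow_atTop hγ).const_mul_atTop hlam
  have hr : Tendsto (fun x : ℝ =>
      (β * Real.log x + Real.log α + h x) / (lam * x ^ γ)) atTop (nhds 0) := by
    have h1 : Tendsto (fun x : ℝ => β * Real.log x / (lam * x ^ γ)) atTop (nhds 0) := by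
      have h := (aux_log_div_rpow γ hγ).const_mul (β / lam)
      rw [mul_zero] at h
      refine h.congr fun x => ?_
      rw [div_mul_div_comm]
    have h2 : Tendsto (fun x : ℝ => Real.log α / (lam * x ^ γ)) atTop (nhds 0) :=
      tendsto_const_nhds.div_atTop hA
    have h3 : Tendsto (fun x : ℝ => h x / (lam * x ^ γ)) atTop (nhds 0) :=
      hh0.div_atTop hA
    have h4 := (h1.add h2).add h3
    rw [add_zero, add_zero] at h4
    refine h4.congr fun x => ?_
    rw [← add_div, ← add_div]
  have hg : Tendsto (fun x : ℝ =>
      lam * x ^ γ / (lam * x ^ γ - (β * Real.log x + Real.log α + h x))) atTop (nhds 1) := by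
    have h1 := ((tendsto_const_nhds (α := ℝ) (x := (1:ℝ))).sub hr).inv₀ (by norm_num)
    rw [sub_zero, inv_one] at h1
    refine h1.congr' ?_
    filter_upwards [eventually_gt_atTop (0:ℝ)] with x hx
    have hAx : lam * x ^ γ ≠ 0 := by positivity
    rw [one_sub_div hAx, inv_div]
  -- conclude by composition
  have hfinal := hg.comp hqtop
  refine hfinal.congr' ?_
  have hev1 : ∀ᶠ p in nhdsWithin 0 (Set.Ioi 0), 0 < tailQuantile F p :=
    hqtop.eventually (eventually_gt_atTop 0)
  have hev2 : ∀ᶠ p : ℝ in nhdsWithin 0 (Set.Ioi 0), p < 1 :=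
    Eventually.filter_mono nhdsWithin_le_nhds (eventually_lt_nhds one_pos)
  filter_upwards [hev1, hev2, self_mem_nhdsWithin] with p hq0 hp1 hp0
  have hp0' : (0:ℝ) < p := hp0
  have hFq := heq p hp0' hp1
  have hGq : 1 - F (tailQuantile F p) = p := by rw [hFq]; ring
  have hlog := hlogG (tailQuantile F p) hq0 (by rw [hGq]; exact hp0')
  rw [hGq] at hlog
  simp only [Function.comp]
  rw [hlog]
  congr 1
  ring

/-- for a random variable with an exponentially-dominated tail (continuous CDF)
and `M_K ≥ 1` with `M_K / ln^μ K → 0` for some `μ > 0`, one has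
`q̄_X(M_K/K) / q̄_X(1/K) → 1` as `K → ∞`. -/
theorem stmt_15 {Ω : Type*} [MeasurableSpace Ω] (μ : Measure Ω) [IsProbabilityMeasure μ]
    (X : Ω → ℝ) (hXmeas : Measurable X)
    (F : ℝ → ℝ) (hFdef : F = cdfOf μ X) (hFcont : Continuous F)
    (α β lam γ : ℝ) (hα : 0 < α) (hlam : 0 < lam) (hγ : 0 < γ)
    (htail : ExpDomTail F α β lam γ)
    (M : ℕ → ℝ) (hM1 : ∀ K, 1 ≤ M K)
    (t : ℝ) (ht : 0 < t)
    (hM : Tendsto (fun K : ℕ => M K / (Real.log K) ^ t) atTop (nhds 0)) :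
    Tendsto (fun K : ℕ => tailQuantile F (M K / K) / tailQuantile F (1 / K)) atTop (nhds 1) := by
  -- basic properties of F
  have hmono : Monotone F := by
    rw [hFdef]
    intro x y hxy
    exact ENNReal.toReal_mono (measure_ne_top μ _)
      (measure_mono fun ω hω => le_trans hω hxy)
  have h0F : ∀ x, 0 ≤ F x := by
    rw [hFdef]; intro x; exact ENNReal.toReal_nonneg
  have hbot : Tendsto F atBot (nhds 0) := by
    have hmap : IsProbabilityMeasure (μ.map X) := Measure.isProbabilityMeasure_map hXmeas.aemeasurable
    have hEq : F = fun x => (cdf (μ.map X)) x := by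
      funext x
      rw [hFdef, cdf_eq_real, Measure.real]
      unfold cdfOf
      rw [Measure.map_apply hXmeas measurableSet_Iic]
      rfl
    rw [hEq]
    exact tendsto_cdf_atBot _
  obtain ⟨hqtop, hmain⟩ :=
    aux_tail_quantile F hmono hFcont h0F hbot α β lam γ hα hlam hγ htail
  -- sequences
  have hKtop : Tendsto (fun K : ℕ => (K:ℝ)) atTop atTop := tendsto_natCast_atTop_atTop
  have hlogK : Tendsto (fun K : ℕ => Real.log K) atTop atTop :=
    Real.tendsto_log_atTop.comp hKtop
  have hlogK1 : ∀ᶠ K : ℕ in atTop, (1:ℝ) < Real.log K :=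
    hlogK.eventually (eventually_gt_atTop 1)
  have hMle : ∀ᶠ K : ℕ in atTop, M K ≤ Real.log K ^ t := by
    have h1 : ∀ᶠ K : ℕ in atTop, M K / Real.log K ^ t < 1 :=
      hM.eventually (eventually_lt_nhds one_pos)
    filter_upwards [h1, hlogK1] with K h1 h2
    have hpos : 0 < Real.log K ^ t := Real.rpow_pos_of_pos (by linarith) t
    exact le_of_lt ((div_lt_one hpos).mp h1)
  have hapos : ∀ᶠ K : ℕ in atTop, 0 < M K / K := by
    filter_upwards [eventually_gt_atTop 0] with K hK
    have : (0:ℝ) < K := by exact_mod_cast hK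
    exact div_pos (lt_of_lt_of_le one_pos (hM1 K)) this
  have ha0 : Tendsto (fun K : ℕ => M K / K) atTop (nhds 0) := by
    have hub : ∀ᶠ K : ℕ in atTop, M K / K ≤ M K / Real.log K ^ t := by
      have hlt : ∀ᶠ K : ℕ in atTop, Real.log K ^ t ≤ K := by
        have h := (aux_rpow_log_div_self t).comp hKtop
        have h1 : ∀ᶠ K : ℕ in atTop, Real.log (K:ℝ) ^ t / (K:ℝ) < 1 :=
          h.eventually (eventually_lt_nhds one_pos)
        filter_upwards [h1, eventually_gt_atTop 0] with K h1 hK0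
        have hKpos : (0:ℝ) < K := by exact_mod_cast hK0
        exact le_of_lt ((div_lt_one hKpos).mp h1)
      filter_upwards [hlt, hlogK1] with K hlt hlg
      have hpos : 0 < Real.log K ^ t := Real.rpow_pos_of_pos (by linarith) t
      have hM0 : 0 ≤ M K := le_trans zero_le_one (hM1 K)
      gcongr
    refine tendsto_of_tendsto_of_tendsto_of_le_of_le' tendsto_const_nhds hM ?_ hub
    filter_upwards [hapos] with K hK using hK.le
  have ha : Tendsto (fun K : ℕ => M K / K) atTop (nhdsWithin 0 (Set.Ioi 0)) :=
    tendsto_nhdsWithin_of_tendsto_nhds_of_eventually_within _ ha0 hapos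
  have hbpos : ∀ᶠ K : ℕ in atTop, (0:ℝ) < 1 / K := by
    filter_upwards [eventually_gt_atTop 0] with K hK
    have : (0:ℝ) < K := by exact_mod_cast hK
    positivity
  have hb : Tendsto (fun K : ℕ => 1 / (K:ℝ)) atTop (nhdsWithin 0 (Set.Ioi 0)) :=
    tendsto_nhdsWithin_of_tendsto_nhds_of_eventually_within _
      tendsto_one_div_atTop_nhds_zero_nat hbpos
  have hAa := hmain.comp ha
  have hBb := hmain.comp hb
  have hqa := hqtop.comp ha
  have hqb := hqtop.comp hb
  -- log M K / log K → 0
  have hloglog : Tendsto (fun K : ℕ => Real.log (Real.log K) / Real.log K) atTop (nhds 0) :=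
    (Real.isLittleO_log_id_atTop.tendsto_div_nhds_zero).comp hlogK
  have hlogM : Tendsto (fun K : ℕ => Real.log (M K) / Real.log K) atTop (nhds 0) := by
    have ht0 : Tendsto (fun K : ℕ => t * (Real.log (Real.log K) / Real.log K))
        atTop (nhds 0) := by
      have h := hloglog.const_mul t
      rwa [mul_zero] at h
    have hub : ∀ᶠ K : ℕ in atTop,
        Real.log (M K) / Real.log K ≤ t * (Real.log (Real.log K) / Real.log K) := by
      filter_upwards [hMle, hlogK1] with K h1 h2
      have hlKpos : (0:ℝ) < Real.log K := by linarith
      have hkey : Real.log (M K) ≤ t * Real.log (Real.log K) := by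
        calc Real.log (M K) ≤ Real.log (Real.log K ^ t) :=
              Real.log_le_log (lt_of_lt_of_le one_pos (hM1 K)) h1
          _ = t * Real.log (Real.log K) := Real.log_rpow hlKpos t
      rw [← mul_div_assoc]
      gcongr
    have hlb : ∀ᶠ K : ℕ in atTop, 0 ≤ Real.log (M K) / Real.log K := by
      filter_upwards [hlogK1] with K h2
      exact div_nonneg (Real.log_nonneg (hM1 K)) (by linarith)
    exact tendsto_of_tendsto_of_tendsto_of_le_of_le' tendsto_const_nhds ht0 hlb hub
  -- ratio of logs → 1
  have hC : Tendsto (fun K : ℕ => (-Real.log (M K / K)) / (-Real.log (1 / (K:ℝ))))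
      atTop (nhds 1) := by
    have h1 : Tendsto (fun K : ℕ => 1 - Real.log (M K) / Real.log K) atTop (nhds 1) := by
      have h := (tendsto_const_nhds : Tendsto (fun _ : ℕ => (1:ℝ)) atTop (nhds 1)).sub hlogM
      rwa [sub_zero] at h
    refine h1.congr' ?_
    filter_upwards [hlogK1, eventually_gt_atTop 0] with K h2 hK0
    have hlKpos : (0:ℝ) < Real.log K := by linarith
    have hMpos : (0:ℝ) < M K := lt_of_lt_of_le one_pos (hM1 K)
    have hKpos : (0:ℝ) < K := by exact_mod_cast hK0
    rw [Real.log_div hMpos.ne' hKpos.ne', one_div, Real.log_inv, neg_neg, neg_sub,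
      sub_div, div_self hlKpos.ne']
  -- combine
  have hTγ : Tendsto (fun K : ℕ =>
      (tailQuantile F (M K / K) / tailQuantile F (1 / K)) ^ γ) atTop (nhds 1) := by
    have h := (hAa.div hBb one_ne_zero).mul hC
    rw [show (1:ℝ)/1*1 = 1 by norm_num] at h
    refine h.congr' ?_
    filter_upwards [hqa.eventually (eventually_gt_atTop 0),
      hqb.eventually (eventually_gt_atTop 0), hapos, hbpos,
      ha0.eventually (eventually_lt_nhds one_pos),
      (tendsto_one_div_atTop_nhds_zero_nat (𝕜 := ℝ)).eventually (eventually_lt_nhds one_pos)]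
      with K hqa0 hqb0 hap hbp halt1 hblt1
    have hla : Real.log (M K / K) < 0 := Real.log_neg hap halt1
    have hlb : Real.log (1 / (K:ℝ)) < 0 := Real.log_neg hbp hblt1
    simp only [Function.comp, Pi.div_apply] at hqa0 hqb0 ⊢
    rw [Real.div_rpow hqa0.le hqb0.le]
    have h1 : Real.log (M K / K) ≠ 0 := hla.ne
    have h2 : Real.log (1 / (K:ℝ)) ≠ 0 := hlb.ne
    have h3 : (tailQuantile F (1 / (K:ℝ))) ^ γ ≠ 0 := (Real.rpow_pos_of_pos hqb0 γ).ne'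
    field_simp
  -- take γ-th root
  have hfin := hTγ.rpow_const (p := γ⁻¹) (Or.inl one_ne_zero)
  rw [Real.one_rpow] at hfin
  refine hfin.congr' ?_
  filter_upwards [hqa.eventually (eventually_gt_atTop 0),
    hqb.eventually (eventually_gt_atTop 0)] with K hqa0 hqb0
  simp only [Function.comp] at hqa0 hqb0 ⊢
  have hT : 0 ≤ tailQuantile F (M K / K) / tailQuantile F (1 / K) :=
    div_nonneg hqa0.le hqb0.le
  rw [← Real.rpow_mul hT, mul_inv_cancel₀ hγ.ne', Real.rpow_one]
end
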